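/- arXiv:1907.08353 — 4 statements merged into one kernel-verified Lean document; each statement's English description precedes it below -/
import Mathlib

section
/- Let q and a be complex numbers with 0 < |q| < 1 and a ≠ q^{-2m} for all integers m ≥ 1 (so that (aq²;q²)_n never vanishes). Then ∑_{n=1}^∞ (−a)^n q^{n(n+1)/2} (−q;q)_{n−1} / (a q²; q²)_n = ∑_{k=1}^∞ (−a)^k q^{k²}. -/
open Finset

/-- The finite q-shifted factorial `(a;q)_n`. -/
noncomputable def qPoch (a q : ℂ) (n : ℕ) : ℂ := ∏ j ∈ Finset.range n, (1 - a * q ^ j)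

/-- The infinite q-shifted factorial `(a;q)_∞`. -/
noncomputable def qPochInf (a q : ℂ) : ℂ := ∏' j : ℕ, (1 - a * q ^ j)

open Filter

noncomputable def ff (q b : ℂ) (n : ℕ) : ℂ :=
  (-b) ^ (n + 1) * q ^ ((n + 1) * (n + 2) / 2) * qPoch (-q) q n / qPoch (b * q ^ 2) (q ^ 2) (n + 1)

noncomputable def gg (q b : ℂ) (n : ℕ) : ℂ :=
  (-b) ^ (n + 2) * q ^ ((n + 2) * (n + 3) / 2) * qPoch (-q) q n / qPoch (b * q ^ 2) (q ^ 2) (n + 1)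

lemma qPoch_succ (a q : ℂ) (n : ℕ) : qPoch a q (n + 1) = qPoch a q n * (1 - a * q ^ n) := by
  simp [qPoch, Finset.prod_range_succ]

lemma qPoch_shift (b q : ℂ) (n : ℕ) :
    qPoch (b * q ^ 2) (q ^ 2) (n + 2)
      = qPoch (b * q ^ 2 * q ^ 2) (q ^ 2) (n + 1) * (1 - b * q ^ 2) := by
  simp only [qPoch]
  rw [show n + 2 = (n + 1) + 1 from rfl, Finset.prod_range_succ']
  congr 1
  · exact Finset.prod_congr rfl (fun j _ => by ring_nf)
  · norm_num

lemma base_id (q b : ℂ) (h : qPoch (b * q ^ 2) (q ^ 2) 1 ≠ 0) :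
    ff q b 0 = -b * q - gg q b 0 := by
  have h1 : (1 : ℂ) - b * q ^ 2 ≠ 0 := by simpa [qPoch] using h
  simp only [ff, gg, qPoch]
  simp only [Finset.prod_range_one, Finset.prod_range_zero]
  norm_num
  field_simp
  ring

lemma step_id (q b : ℂ) (n : ℕ) (hP : qPoch (b * q ^ 2) (q ^ 2) (n + 1) ≠ 0)
    (hx : (1 : ℂ) - b * q ^ 2 * (q ^ 2) ^ (n + 1) ≠ 0) (hb2 : (1 : ℂ) - b * q ^ 2 ≠ 0) :
    ff q b (n + 1) = -b * q * ff q (b * q ^ 2) n + gg q b n - gg q b (n + 1) := by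
  have hP2 : qPoch (b * q ^ 2) (q ^ 2) (n + 1 + 1) = qPoch (b * q ^ 2) (q ^ 2) (n + 1) *
      (1 - b * q ^ 2 * (q ^ 2) ^ (n + 1)) := qPoch_succ _ _ _
  have hR : qPoch (b * q ^ 2 * q ^ 2) (q ^ 2) (n + 1)
      = qPoch (b * q ^ 2) (q ^ 2) (n + 1) * (1 - b * q ^ 2 * (q ^ 2) ^ (n + 1)) / (1 - b * q ^ 2) := by
    rw [← hP2, show n + 1 + 1 = n + 2 from rfl, qPoch_shift]; field_simp
  have hf : ff q (b * q ^ 2) n = (-(b * q ^ 2)) ^ (n + 1) * q ^ ((n + 1) * (n + 2) / 2) *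
      qPoch (-q) q n * (1 - b * q ^ 2) /
      (qPoch (b * q ^ 2) (q ^ 2) (n + 1) * (1 - b * q ^ 2 * (q ^ 2) ^ (n + 1))) := by
    rw [ff, hR, div_div_eq_mul_div]
  have hQ : qPoch (-q) q (n + 1) = qPoch (-q) q n * (1 + q ^ (n + 1)) := by
    rw [qPoch_succ]; ring_nf
  have e0 : (n + 2) * (n + 3) / 2 = (n + 1) * (n + 2) / 2 + (n + 2) := by
    have s1 : (n + 1) * (n + 2) = n * n + 3 * n + 2 := by ring
    have s2 : (n + 2) * (n + 3) = n * n + 5 * n + 6 := by ring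
    rw [s1, s2]; generalize n * n = m; omega
  have e1 : (n + 1 + 1) * (n + 1 + 2) / 2 = (n + 1) * (n + 2) / 2 + (n + 2) := e0
  have e2 : (n + 1 + 2) * (n + 1 + 3) / 2 = (n + 1) * (n + 2) / 2 + (2 * n + 5) := by
    have s1 : (n + 1) * (n + 2) = n * n + 3 * n + 2 := by ring
    have s2 : (n + 1 + 2) * (n + 1 + 3) = n * n + 7 * n + 12 := by ring
    rw [s1, s2]; generalize n * n = m; omega
  rw [hf]
  simp only [ff, gg, hP2, hQ, e0, e1, e2, pow_add]
  simp only [div_eq_mul_inv, mul_inv]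
  have hv : (1 - b*q^2*(q^2)^(n+1)) * (1 - b*q^2*(q^2)^(n+1))⁻¹ = 1 := mul_inv_cancel₀ hx
  linear_combination ((-b)^(n+2) * (q^((n+1)*(n+2)/2) * q^(n+2)) * qPoch (-q) q n *
    (qPoch (b*q^2) (q^2) (n+1))⁻¹) * hv

lemma qPoch_ne (q b : ℂ) (hfb : ∀ j : ℕ, (1:ℂ) - b * q^2 * (q^2)^j ≠ 0) (n : ℕ) :
    qPoch (b*q^2) (q^2) n ≠ 0 := by
  rw [qPoch]; exact Finset.prod_ne_zero_iff.mpr fun j _ => hfb j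

lemma sum_rec (q b : ℂ) (hfb : ∀ j : ℕ, (1:ℂ) - b * q^2 * (q^2)^j ≠ 0) (M : ℕ) :
    ∑ n ∈ range (M+1), ff q b n
      = -b*q - b*q * (∑ n ∈ range M, ff q (b*q^2) n) - gg q b M := by
  have hP := qPoch_ne q b hfb
  have hb2 : (1:ℂ) - b*q^2 ≠ 0 := by simpa using hfb 0
  induction M with
  | zero => rw [Finset.sum_range_one, Finset.sum_range_zero, base_id q b (hP 1)]; ring
  | succ M ih =>
      rw [Finset.sum_range_succ, ih, Finset.sum_range_succ,
        step_id q b M (hP (M+1)) (hfb (M+1)) hb2]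
      ring

lemma phi (q a : ℂ) (hfac : ∀ i : ℕ, (1:ℂ) - a * q^(2*i+2) ≠ 0) :
    ∀ (M k : ℕ),
    ∑ n ∈ range M, ff q (a*q^(2*k)) n
      = (∑ j ∈ range M, (-(a*q^(2*k)))^(j+1) * q^((j+1)^2))
        - ∑ j ∈ range M, (-(a*q^(2*k)))^j * q^(j^2) * gg q (a*q^(2*k+2*j)) (M-1-j) := by
  intro M
  induction M with
  | zero => simp
  | succ M ih =>
      intro k
      have hfb : ∀ j : ℕ, (1:ℂ) - (a*q^(2*k)) * q^2 * (q^2)^j ≠ 0 := fun j => by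
        have h := hfac (k+j)
        have e : (1:ℂ) - (a*q^(2*k)) * q^2 * (q^2)^j = 1 - a*q^(2*(k+j)+2) := by ring
        rw [e]; exact h
      rw [sum_rec q _ hfb M]
      have hbq : (a*q^(2*k))*q^2 = a*q^(2*(k+1)) := by ring
      rw [hbq, ih (k+1)]
      rw [Finset.sum_range_succ' (fun j => (-(a*q^(2*k)))^(j+1) * q^((j+1)^2)) M]
      rw [Finset.sum_range_succ'
        (fun j => (-(a*q^(2*k)))^j * q^(j^2) * gg q (a*q^(2*k+2*j)) (M+1-1-j)) M]
      have h1 : ∑ j ∈ range M, (-(a*q^(2*k)))^(j+1+1) * q^((j+1+1)^2)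
          = -((a*q^(2*k))*q) * ∑ j ∈ range M, (-(a*q^(2*(k+1))))^(j+1) * q^((j+1)^2) := by
        rw [Finset.mul_sum]
        refine Finset.sum_congr rfl fun j _ => ?_
        have e1 : (j+1+1)^2 = (j+1)^2 + (2*j+3) := by ring
        have e2 : (-(a*q^(2*(k+1)))) = -(a*q^(2*k)) * q^2 := by ring
        rw [e1, pow_add, e2, mul_pow]
        ring
      have h2 : ∑ j ∈ range M,
            (-(a*q^(2*k)))^(j+1) * q^((j+1)^2) * gg q (a*q^(2*k+2*(j+1))) (M+1-1-(j+1))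
          = -((a*q^(2*k))*q) * ∑ j ∈ range M,
            (-(a*q^(2*(k+1))))^j * q^(j^2) * gg q (a*q^(2*(k+1)+2*j)) (M-1-j) := by
        rw [Finset.mul_sum]
        refine Finset.sum_congr rfl fun j _ => ?_
        have e1 : 2*k+2*(j+1) = 2*(k+1)+2*j := by ring
        have e2 : M+1-1-(j+1) = M-1-j := by omega
        rw [e1, e2]
        have e3 : (j+1)^2 = j^2 + (2*j+1) := by ring
        have e4 : (-(a*q^(2*(k+1)))) = -(a*q^(2*k)) * q^2 := by ring
        rw [e3, pow_add, e4, mul_pow]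
        ring
      simp only [h1, h2]
      norm_num
      ring

lemma myGeom_le' {r : ℝ} (h0 : 0 ≤ r) (h1 : r < 1) (n : ℕ) :
    ∑ i ∈ range n, r ^ i ≤ (1 - r)⁻¹ := by
  have h2 : 0 < 1 - r := by linarith
  rw [inv_eq_one_div, le_div_iff₀ h2]
  nlinarith [geom_sum_mul r n, pow_nonneg h0 n]

lemma weier (s : Finset ℕ) (x : ℕ → ℝ) (h0 : ∀ i ∈ s, 0 ≤ x i) (h1 : ∀ i ∈ s, x i ≤ 1) :
    1 - ∑ i ∈ s, x i ≤ ∏ i ∈ s, (1 - x i) := by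
  induction s using Finset.cons_induction with
  | empty => simp
  | cons a s ha ih =>
      rw [Finset.prod_cons, Finset.sum_cons]
      have hp : 0 ≤ ∏ i ∈ s, (1 - x i) := by
        apply Finset.prod_nonneg
        intro i hi
        have := h1 i (Finset.mem_cons_of_mem hi); linarith
      have hs0 : 0 ≤ ∑ i ∈ s, x i :=
        Finset.sum_nonneg fun i hi => h0 i (Finset.mem_cons_of_mem hi)
      have ih' := ih (fun i hi => h0 i (Finset.mem_cons_of_mem hi))
        (fun i hi => h1 i (Finset.mem_cons_of_mem hi))
      have hxa0 := h0 a (Finset.mem_cons_self a s)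
      have hxa1 := h1 a (Finset.mem_cons_self a s)
      nlinarith [ih', hp, hs0, hxa0, hxa1]

lemma prod_w_lower (q a : ℂ) (hq1 : ‖q‖ < 1)
    (hfac : ∀ i : ℕ, (1:ℂ) - a * q^(2*i+2) ≠ 0) :
    ∃ c : ℝ, 0 < c ∧ ∀ s : Finset ℕ, c ≤ ∏ i ∈ s, ‖1 - a * q^(2*i+2)‖ := by
  set r := ‖q‖ with hr
  have hr0 : 0 ≤ r := norm_nonneg q
  have hr2 : 0 ≤ r^2 := sq_nonneg r
  have hr21 : r^2 < 1 := by nlinarith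
  have h1r2 : 0 < 1 - r^2 := by linarith
  set w : ℕ → ℝ := fun i => ‖1 - a * q^(2*i+2)‖ with hw
  set x : ℕ → ℝ := fun i => ‖a * q^(2*i+2)‖ with hx
  have hw0 : ∀ i, 0 < w i := fun i => norm_pos_iff.mpr (hfac i)
  have hx0 : ∀ i, 0 ≤ x i := fun i => norm_nonneg _
  have hxval : ∀ i, x i = ‖a‖ * (r^2 * (r^2)^i) := by
    intro i
    simp only [hx, norm_mul, norm_pow]
    rw [show 2*i+2 = 2*(i+1) from by ring, pow_mul]
    rw [← hr]
    ring
  -- choose i0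
  have hT : Filter.Tendsto (fun i : ℕ => ‖a‖ * (r^2 * (r^2)^i)) atTop (nhds 0) := by
    have h := tendsto_pow_atTop_nhds_zero_of_lt_one hr2 hr21
    have := (h.const_mul (r^2)).const_mul (‖a‖)
    simpa using this
  have hev : ∀ᶠ i in atTop, ‖a‖ * (r^2 * (r^2)^i) < (1 - r^2)/2 :=
    hT.eventually_lt_const (by positivity)
  obtain ⟨i0, hi0⟩ := hev.exists_forall_of_atTop
  have hxle : ∀ i, i0 ≤ i → x i ≤ (1 - r^2)/2 := by
    intro i hi; rw [hxval]; exact (hi0 i hi).le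
  have hhalf : (1 - r^2)/2 ≤ 1/2 := by nlinarith
  -- sum bound over subsets of [i0, ∞)
  have hsumb : ∀ s : Finset ℕ, (∀ i ∈ s, i0 ≤ i) → ∑ i ∈ s, x i ≤ 1/2 := by
    intro s hs
    obtain ⟨N, hN⟩ := s.exists_nat_subset_range
    have hsub : s ⊆ Finset.Ico i0 N := by
      intro i hi
      exact Finset.mem_Ico.mpr ⟨hs i hi, Finset.mem_range.mp (hN hi)⟩
    have h1 : ∑ i ∈ s, x i ≤ ∑ i ∈ Finset.Ico i0 N, x i :=
      Finset.sum_le_sum_of_subset_of_nonneg hsub (fun i _ _ => hx0 i)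
    have h2 : ∑ i ∈ Finset.Ico i0 N, x i
        = ∑ t ∈ range (N - i0), x (i0 + t) := Finset.sum_Ico_eq_sum_range x i0 N
    have h3 : ∀ t : ℕ, x (i0 + t) = (‖a‖ * (r^2 * (r^2)^i0)) * (r^2)^t := by
      intro t; rw [hxval]; rw [pow_add]; ring
    have h4 : ∑ t ∈ range (N - i0), x (i0 + t)
        = (‖a‖ * (r^2 * (r^2)^i0)) * ∑ t ∈ range (N - i0), (r^2)^t := by
      rw [Finset.mul_sum]; exact Finset.sum_congr rfl fun t _ => h3 t
    have h5 : ∑ t ∈ range (N - i0), (r^2)^t ≤ (1 - r^2)⁻¹ := myGeom_le' hr2 hr21 _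
    have h6 : ‖a‖ * (r^2 * (r^2)^i0) ≤ (1 - r^2)/2 := (hi0 i0 le_rfl).le
    calc ∑ i ∈ s, x i ≤ ∑ i ∈ Finset.Ico i0 N, x i := h1
      _ = (‖a‖ * (r^2 * (r^2)^i0)) * ∑ t ∈ range (N - i0), (r^2)^t := by
          rw [h2, h4]
      _ ≤ ((1 - r^2)/2) * (1 - r^2)⁻¹ := by
          apply mul_le_mul h6 h5 (Finset.sum_nonneg fun t _ => pow_nonneg hr2 t) (by positivity)
      _ = 1/2 := by field_simp
  -- the constant
  refine ⟨(∏ i ∈ range i0, min 1 (w i)) * (1/2), ?_, ?_⟩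
  · apply mul_pos (Finset.prod_pos fun i _ => lt_min one_pos (hw0 i)) (by norm_num)
  intro s
  set L : ℕ → ℝ := fun i => if i < i0 then min 1 (w i) else 1 - x i with hL
  have hL0 : ∀ i, 0 ≤ L i := by
    intro i
    simp only [hL]
    split
    · exact le_min zero_le_one (hw0 i).le
    · rename_i h
      have := hxle i (by omega)
      linarith [hhalf]
  have hLw : ∀ i, L i ≤ w i := by
    intro i
    simp only [hL]
    split
    · exact min_le_right _ _
    · have : 1 - x i ≤ w i := by
        have := norm_sub_norm_le (1:ℂ) (a*q^(2*i+2))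
        simpa [hw, hx] using this
      exact this
  have hstep1 : ∏ i ∈ s, L i ≤ ∏ i ∈ s, w i :=
    Finset.prod_le_prod (fun i _ => hL0 i) (fun i _ => hLw i)
  have hsplit : ∏ i ∈ s, L i
      = (∏ i ∈ s.filter (fun i => i < i0), L i) * ∏ i ∈ s.filter (fun i => ¬ i < i0), L i :=
    (Finset.prod_filter_mul_prod_filter_not s _ _).symm
  have hP1 : ∏ i ∈ range i0, min 1 (w i) ≤ ∏ i ∈ s.filter (fun i => i < i0), L i := by
    have hsub : s.filter (fun i => i < i0) ⊆ range i0 := by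
      intro i hi; exact Finset.mem_range.mpr (Finset.mem_filter.mp hi).2
    have heq : ∏ i ∈ s.filter (fun i => i < i0), L i
        = ∏ i ∈ s.filter (fun i => i < i0), min 1 (w i) := by
      refine Finset.prod_congr rfl fun i hi => ?_
      simp only [hL, if_pos (Finset.mem_filter.mp hi).2]
    rw [heq, ← Finset.prod_sdiff hsub]
    have hone : ∏ i ∈ range i0 \ s.filter (fun i => i < i0), min 1 (w i) ≤ 1 :=
      Finset.prod_le_one (fun i _ => le_min zero_le_one (hw0 i).le)
        (fun i _ => min_le_left _ _)
    have hpos : 0 ≤ ∏ i ∈ s.filter (fun i => i < i0), min 1 (w i) :=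
      Finset.prod_nonneg fun i _ => le_min zero_le_one (hw0 i).le
    nlinarith [hone, hpos]
  have hP2 : (1:ℝ)/2 ≤ ∏ i ∈ s.filter (fun i => ¬ i < i0), L i := by
    have heq : ∏ i ∈ s.filter (fun i => ¬ i < i0), L i
        = ∏ i ∈ s.filter (fun i => ¬ i < i0), (1 - x i) := by
      refine Finset.prod_congr rfl fun i hi => ?_
      simp only [hL, if_neg (Finset.mem_filter.mp hi).2]
    rw [heq]
    have hmem : ∀ i ∈ s.filter (fun i => ¬ i < i0), i0 ≤ i := by
      intro i hi; have := (Finset.mem_filter.mp hi).2; omega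
    have hb := hsumb _ hmem
    have hx1 : ∀ i ∈ s.filter (fun i => ¬ i < i0), x i ≤ 1 := by
      intro i hi
      have := hxle i (hmem i hi)
      linarith [hhalf]
    have := weier _ x (fun i _ => hx0 i) hx1
    linarith
  calc (∏ i ∈ range i0, min 1 (w i)) * (1/2)
      ≤ (∏ i ∈ s.filter (fun i => i < i0), L i) * ∏ i ∈ s.filter (fun i => ¬ i < i0), L i := by
        apply mul_le_mul hP1 hP2 (by norm_num)
        exact Finset.prod_nonneg fun i _ => hL0 i
    _ = ∏ i ∈ s, L i := hsplit.symm
    _ ≤ ∏ i ∈ s, w i := hstep1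

lemma expo_aux (j s : ℕ) (hs : 2 ≤ s) :
    (j + s) * (j + s + 1) / 2 ≤ j ^ 2 + 2 * j * s + s * (s + 1) / 2 := by
  obtain ⟨x, hx⟩ := Nat.even_mul_succ_self s
  obtain ⟨y, hy⟩ := Nat.even_mul_succ_self (j + s)
  have hx' : s * (s + 1) / 2 = x := by rw [hx]; omega
  have hy' : (j + s) * (j + s + 1) / 2 = y := by rw [hy]; omega
  rw [hx', hy']
  nlinarith [hx, hy]

lemma qPoch_negq_abs_le (q : ℂ) (hq1 : ‖q‖ < 1) (n : ℕ) :
    ‖qPoch (-q) q n‖ ≤ Real.exp ((1 - ‖q‖)⁻¹) := by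
  set r := ‖q‖ with hr
  have hr0 : 0 ≤ r := norm_nonneg q
  rw [qPoch, norm_prod]
  calc ∏ j ∈ range n, ‖1 - (-q) * q ^ j‖
      ≤ ∏ j ∈ range n, Real.exp (r ^ j) := by
        apply Finset.prod_le_prod (fun j _ => norm_nonneg _)
        intro j _
        have h2 := norm_sub_le (1 : ℂ) ((-q) * q ^ j)
        have h3 : ‖(-q) * q ^ j‖ = r ^ j * r := by
          rw [norm_mul, norm_neg, norm_pow, ← hr]; ring
        have h1 : ‖1 - (-q) * q ^ j‖ ≤ 1 + r ^ j * r := by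
          rw [← h3]; simpa using h2
        have h4 : r ^ j * r ≤ r ^ j := by nlinarith [pow_nonneg hr0 j]
        have h5 : (1 : ℝ) + r ^ j ≤ Real.exp (r ^ j) := by
          have := Real.add_one_le_exp (r ^ j); linarith
        linarith
  _ = Real.exp (∑ j ∈ range n, r ^ j) := by rw [Real.exp_sum]
  _ ≤ Real.exp ((1 - r)⁻¹) := Real.exp_le_exp.mpr (myGeom_le' hr0 hq1 n)

/-- Ramanujan's Lost Notebook, p. 28 (Entry 1.6.2 of Andrews–Berndt). -/
theorem ramanujan_p28 (q a : ℂ) (hq0 : 0 < ‖q‖) (hq1 : ‖q‖ < 1)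
    (ham : ∀ m : ℕ, 1 ≤ m → a ≠ q ^ (-(2 * m : ℤ))) :
    ∑' n : ℕ, (-a) ^ (n + 1) * q ^ ((n + 1) * (n + 2) / 2) * qPoch (-q) q n /
        qPoch (a * q ^ 2) (q ^ 2) (n + 1)
    = ∑' k : ℕ, (-a) ^ (k + 1) * q ^ ((k + 1) ^ 2) := by
  have hq : q ≠ 0 := by
    intro h; rw [h] at hq0; simp at hq0
  set r := ‖q‖ with hr
  have hr0 : 0 ≤ r := norm_nonneg q
  have haa : 0 ≤ ‖a‖ := norm_nonneg a
  -- factors nonzero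
  have hfac : ∀ i : ℕ, (1:ℂ) - a * q ^ (2*i+2) ≠ 0 := by
    intro i h
    apply ham (i + 1) (by omega)
    have h1 : a * q ^ (2*i+2) = 1 := by linear_combination -h
    have h2 : q ^ (2*i+2) ≠ 0 := pow_ne_zero _ hq
    have h3 : a = (q ^ (2*i+2))⁻¹ := by field_simp at h1 ⊢; linear_combination h1
    rw [h3]
    rw [show (-(2 * ((i+1 : ℕ) : ℤ))) = -((2*i+2 : ℕ) : ℤ) from by push_cast; ring]
    rw [zpow_neg, zpow_natCast]
  obtain ⟨c, hc0, hc⟩ := prod_w_lower q a hq1 hfac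
  set Cq := Real.exp ((1 - r)⁻¹) with hCq
  have hCq0 : 0 < Cq := Real.exp_pos _
  -- denominator lower bound
  have hden : ∀ k m : ℕ, c ≤ ‖qPoch (a*q^(2*k)*q^2) (q^2) m‖ := by
    intro k m
    have e1 : qPoch (a*q^(2*k)*q^2) (q^2) m = ∏ j ∈ range m, (1 - a*q^(2*(k+j)+2)) := by
      rw [qPoch]
      exact Finset.prod_congr rfl fun j _ => by
        rw [show a*q^(2*k)*q^2*(q^2)^j = a*q^(2*(k+j)+2) from by ring]
    rw [e1, norm_prod]
    have e2 : ∏ j ∈ range m, ‖1 - a*q^(2*(k+j)+2)‖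
        = ∏ i ∈ Finset.Ico k (k+m), ‖1 - a*q^(2*i+2)‖ := by
      rw [Finset.prod_Ico_eq_prod_range]
      rw [show k + m - k = m from by omega]
    rw [e2]
    exact hc _
  -- gg bound
  have hgg : ∀ k n : ℕ, ‖gg q (a*q^(2*k)) n‖
      ≤ ((‖a‖)^(n+2) * r^(2*k*(n+2)) * r^((n+2)*(n+3)/2) * Cq) / c := by
    intro k n
    have e : ‖gg q (a*q^(2*k)) n‖
        = ((‖a‖)^(n+2) * r^(2*k*(n+2)) * r^((n+2)*(n+3)/2)
            * ‖qPoch (-q) q n‖)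
          / ‖qPoch (a*q^(2*k)*q^2) (q^2) (n+1)‖ := by
      rw [gg, norm_div, norm_mul, norm_mul, norm_pow, norm_neg, norm_mul, norm_pow,
        norm_pow, mul_pow, ← pow_mul, ← hr]
    rw [e]
    apply div_le_div₀ (by positivity)
      (mul_le_mul_of_nonneg_left (qPoch_negq_abs_le q hq1 n) (by positivity)) hc0
      (hden k (n+1))
  -- term bound
  have hterm : ∀ M j : ℕ, j < M →
      ‖(-a)^j * q^(j^2) * gg q (a*q^(2*j)) (M-1-j)‖
        ≤ (Cq / c) * ((‖a‖)^(M+1) * r^((M+1)*(M+2)/2)) := by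
    intro M j hj
    set n := M - 1 - j with hn
    have hjn : j + (n + 2) = M + 1 := by omega
    have e : ‖(-a)^j * q^(j^2) * gg q (a*q^(2*j)) n‖
        = (‖a‖)^j * r^(j^2) * ‖gg q (a*q^(2*j)) n‖ := by
      rw [norm_mul, norm_mul, norm_pow, norm_pow, norm_neg, ← hr]
    rw [e]
    have h1 : (‖a‖)^j * r^(j^2) * ‖gg q (a*q^(2*j)) n‖
        ≤ (‖a‖)^j * r^(j^2) *
          (((‖a‖)^(n+2) * r^(2*j*(n+2)) * r^((n+2)*(n+3)/2) * Cq) / c) :=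
      mul_le_mul_of_nonneg_left (hgg j n) (by positivity)
    have e2 : (‖a‖)^j * r^(j^2) *
          (((‖a‖)^(n+2) * r^(2*j*(n+2)) * r^((n+2)*(n+3)/2) * Cq) / c)
        = (Cq / c) * ((‖a‖)^(M+1) * r^(j^2 + 2*j*(n+2) + (n+2)*(n+3)/2)) := by
      rw [show (‖a‖)^(M+1) = (‖a‖)^j * (‖a‖)^(n+2) from by
        rw [← pow_add, hjn]]
      rw [pow_add, pow_add]
      ring
    have h2 : r^(j^2 + 2*j*(n+2) + (n+2)*(n+3)/2) ≤ r^((M+1)*(M+2)/2) := by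
      apply pow_le_pow_of_le_one hr0 hq1.le
      have := expo_aux j (n+2) (by omega)
      rw [hjn] at this
      calc (M+1)*(M+2)/2 = (M+1)*(M+1+1)/2 := by norm_num
        _ ≤ j^2 + 2*j*(n+2) + (n+2)*(n+3)/2 := this
    calc (‖a‖)^j * r^(j^2) * ‖gg q (a*q^(2*j)) n‖
        ≤ (Cq / c) * ((‖a‖)^(M+1) * r^(j^2 + 2*j*(n+2) + (n+2)*(n+3)/2)) := by
          rw [← e2]; exact h1
      _ ≤ (Cq / c) * ((‖a‖)^(M+1) * r^((M+1)*(M+2)/2)) := by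
          apply mul_le_mul_of_nonneg_left _ (by positivity)
          exact mul_le_mul_of_nonneg_left h2 (by positivity)
  -- the key finite identity at k = 0
  have key : ∀ M : ℕ, ∑ n ∈ range M, ff q a n
      = (∑ j ∈ range M, (-a)^(j+1) * q^((j+1)^2))
        - ∑ j ∈ range M, (-a)^j * q^(j^2) * gg q (a*q^(2*j)) (M-1-j) := by
    intro M
    have h := phi q a hfac M 0
    simpa using h
  -- remainder tends to zero
  obtain ⟨m0, hm0⟩ : ∃ m0 : ℕ, ‖a‖ * r^m0 < 1/2 := by
    have hT : Tendsto (fun m : ℕ => ‖a‖ * r^m) atTop (nhds 0) := by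
      have := (tendsto_pow_atTop_nhds_zero_of_lt_one hr0 hq1).const_mul (‖a‖)
      simpa using this
    exact (hT.eventually_lt_const (by norm_num)).exists
  have hWpos : ∀ M : ℕ,
      ‖∑ j ∈ range M, (-a)^j * q^(j^2) * gg q (a*q^(2*j)) (M-1-j)‖
        ≤ (M : ℝ) * ((Cq / c) * ((‖a‖)^(M+1) * r^((M+1)*(M+2)/2))) := by
    intro M
    calc ‖∑ j ∈ range M, (-a)^j * q^(j^2) * gg q (a*q^(2*j)) (M-1-j)‖
        ≤ ∑ j ∈ range M, ‖(-a)^j * q^(j^2) * gg q (a*q^(2*j)) (M-1-j)‖ := by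
          simpa using
            norm_sum_le (range M) (fun j => (-a)^j * q^(j^2) * gg q (a*q^(2*j)) (M-1-j))
      _ ≤ ∑ _j ∈ range M, (Cq / c) * ((‖a‖)^(M+1) * r^((M+1)*(M+2)/2)) :=
          Finset.sum_le_sum fun j hj => hterm M j (Finset.mem_range.mp hj)
      _ = (M : ℝ) * ((Cq / c) * ((‖a‖)^(M+1) * r^((M+1)*(M+2)/2))) := by
          rw [Finset.sum_const, Finset.card_range, nsmul_eq_mul]
  have hbound_ev : ∀ M : ℕ, 2*m0 ≤ M →
      (M : ℝ) * ((Cq / c) * ((‖a‖)^(M+1) * r^((M+1)*(M+2)/2)))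
        ≤ (Cq / c) * ((M : ℝ) * (1/2)^(M+1)) := by
    intro M hM
    have hexp : (M+1)*m0 ≤ (M+1)*(M+2)/2 := by
      rw [Nat.le_div_iff_mul_le (by norm_num : 0 < 2)]
      have : m0 * 2 ≤ M + 2 := by omega
      calc (M+1)*m0*2 = (M+1)*(m0*2) := by ring
        _ ≤ (M+1)*(M+2) := Nat.mul_le_mul_left _ this
    have h1 : r^((M+1)*(M+2)/2) ≤ r^((M+1)*m0) :=
      pow_le_pow_of_le_one hr0 hq1.le hexp
    have h2 : (‖a‖)^(M+1) * r^((M+1)*(M+2)/2)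
        ≤ (‖a‖ * r^m0)^(M+1) := by
      rw [mul_pow, ← pow_mul]
      rw [show m0*(M+1) = (M+1)*m0 from by ring]
      exact mul_le_mul_of_nonneg_left h1 (by positivity)
    have h3 : (‖a‖ * r^m0)^(M+1) ≤ (1/2)^(M+1) :=
      pow_le_pow_left₀ (by positivity) hm0.le _
    calc (M : ℝ) * ((Cq / c) * ((‖a‖)^(M+1) * r^((M+1)*(M+2)/2)))
        ≤ (M : ℝ) * ((Cq / c) * (1/2)^(M+1)) := by
          apply mul_le_mul_of_nonneg_left _ (Nat.cast_nonneg M)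
          exact mul_le_mul_of_nonneg_left (h2.trans h3) (by positivity)
      _ = (Cq / c) * ((M : ℝ) * (1/2)^(M+1)) := by ring
  have hgamma : Tendsto (fun M : ℕ => (Cq / c) * ((M : ℝ) * (1/2)^(M+1))) atTop (nhds 0) := by
    have hsum : Summable (fun M : ℕ => (M : ℝ) * (1/2)^M) := by
      have h := summable_norm_pow_mul_geometric_of_norm_lt_one 1
        (by norm_num : ‖(1/2 : ℝ)‖ < 1)
      have h2 := h.of_norm
      simpa [pow_one] using h2
    have h0 : Tendsto (fun M : ℕ => (M : ℝ) * (1/2)^M) atTop (nhds 0) :=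
      hsum.tendsto_atTop_zero
    have h1 := h0.const_mul ((Cq/c) * (1/2))
    have e : (fun M : ℕ => (Cq / c) * ((M : ℝ) * (1/2)^(M+1)))
        = fun M : ℕ => ((Cq/c) * (1/2)) * ((M:ℝ)*(1/2)^M) := by
      funext M; rw [pow_succ]; ring
    rw [e]
    simpa using h1
  have hWtend : Tendsto
      (fun M => ∑ j ∈ range M, (-a)^j * q^(j^2) * gg q (a*q^(2*j)) (M-1-j)) atTop (nhds 0) := by
    rw [tendsto_zero_iff_norm_tendsto_zero]
    apply squeeze_zero' (Filter.Eventually.of_forall fun M => norm_nonneg _) _ hgamma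
    filter_upwards [eventually_ge_atTop (2*m0)] with M hM
    calc ‖∑ j ∈ range M, (-a)^j * q^(j^2) * gg q (a*q^(2*j)) (M-1-j)‖
        ≤ (M : ℝ) * ((Cq / c) * ((‖a‖)^(M+1) * r^((M+1)*(M+2)/2))) := by
          simpa using hWpos M
      _ ≤ (Cq / c) * ((M : ℝ) * (1/2)^(M+1)) := hbound_ev M hM
  -- bound on ff
  have hden0 : c ≤ ‖qPoch (a*q^2) (q^2) ((0:ℕ)+1)‖ → True := fun _ => trivial
  have hffb : ∀ n : ℕ, ‖ff q a n‖
      ≤ (Cq/c) * ((‖a‖)^(n+1) * r^((n+1)*(n+2)/2)) := by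
    intro n
    have hd : c ≤ ‖qPoch (a*q^2) (q^2) (n+1)‖ := by
      have h := hden 0 (n+1)
      rw [show a*q^(2*0)*q^2 = a*q^2 from by norm_num] at h
      exact h
    have e : ‖ff q a n‖
        = ((‖a‖)^(n+1) * r^((n+1)*(n+2)/2) * ‖qPoch (-q) q n‖)
          / ‖qPoch (a*q^2) (q^2) (n+1)‖ := by
      rw [ff, norm_div, norm_mul, norm_mul, norm_pow, norm_neg, norm_pow, ← hr]
    rw [e]
    calc ((‖a‖)^(n+1) * r^((n+1)*(n+2)/2) * ‖qPoch (-q) q n‖)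
          / ‖qPoch (a*q^2) (q^2) (n+1)‖
        ≤ ((‖a‖)^(n+1) * r^((n+1)*(n+2)/2) * Cq) / c :=
          div_le_div₀ (by positivity)
            (mul_le_mul_of_nonneg_left (qPoch_negq_abs_le q hq1 n) (by positivity)) hc0 hd
      _ = (Cq/c) * ((‖a‖)^(n+1) * r^((n+1)*(n+2)/2)) := by ring
  have hsf : Summable (fun n => ff q a n) := by
    apply Summable.of_norm
    apply Summable.of_nonneg_of_le (fun n => norm_nonneg _)
      (fun n => by simpa using hffb n)
    apply Summable.mul_left
    apply summable_of_ratio_norm_eventually_le (r := 1/2) (by norm_num)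
    filter_upwards [eventually_ge_atTop m0] with n hn
    have hval : ∀ m : ℕ, ‖(‖a‖)^(m+1) * r^((m+1)*(m+2)/2)‖
        = (‖a‖)^(m+1) * r^((m+1)*(m+2)/2) :=
      fun m => Real.norm_of_nonneg (by positivity)
    rw [hval, hval]
    have e : (n+1+1)*(n+1+2)/2 = (n+1)*(n+2)/2 + (n+2) := by
      have s1 : (n + 1) * (n + 2) = n * n + 3 * n + 2 := by ring
      have s2 : (n + 1 + 1) * (n + 1 + 2) = n * n + 5 * n + 6 := by ring
      rw [s1, s2]; generalize n * n = m; omega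
    rw [e]
    have h1 : ‖a‖ * r^(n+2) ≤ ‖a‖ * r^m0 :=
      mul_le_mul_of_nonneg_left (pow_le_pow_of_le_one hr0 hq1.le (by omega)) haa
    have h2 : ‖a‖ * r^(n+2) ≤ 1/2 := h1.trans hm0.le
    have h3 : (0:ℝ) ≤ (‖a‖)^(n+1) * r^((n+1)*(n+2)/2) := by positivity
    calc (‖a‖)^(n+1+1) * r^((n+1)*(n+2)/2 + (n+2))
        = ((‖a‖)^(n+1) * r^((n+1)*(n+2)/2)) * (‖a‖ * r^(n+2)) := by
          rw [pow_add, pow_succ]; ring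
      _ ≤ ((‖a‖)^(n+1) * r^((n+1)*(n+2)/2)) * (1/2) :=
          mul_le_mul_of_nonneg_left h2 h3
      _ = 1/2 * ((‖a‖)^(n+1) * r^((n+1)*(n+2)/2)) := by ring
  have hst : Summable (fun k : ℕ => (-a)^(k+1) * q^((k+1)^2)) := by
    apply summable_of_ratio_norm_eventually_le (r := 1/2) (by norm_num)
    filter_upwards [eventually_ge_atTop m0] with k hk
    have hv : ∀ m : ℕ, ‖(-a)^(m+1) * q^((m+1)^2)‖
        = (‖a‖)^(m+1) * r^((m+1)^2) := by
      intro m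
      rw [norm_mul, norm_pow, norm_pow, norm_neg, ← hr]
    rw [hv, hv]
    have e : (k+1+1)^2 = (k+1)^2 + (2*k+3) := by ring
    rw [e]
    have h1 : ‖a‖ * r^(2*k+3) ≤ ‖a‖ * r^m0 :=
      mul_le_mul_of_nonneg_left (pow_le_pow_of_le_one hr0 hq1.le (by omega)) haa
    have h2 : ‖a‖ * r^(2*k+3) ≤ 1/2 := h1.trans hm0.le
    have h3 : (0:ℝ) ≤ (‖a‖)^(k+1) * r^((k+1)^2) := by positivity
    calc (‖a‖)^(k+1+1) * r^((k+1)^2 + (2*k+3))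
        = ((‖a‖)^(k+1) * r^((k+1)^2)) * (‖a‖ * r^(2*k+3)) := by
          rw [pow_add, pow_succ]; ring
      _ ≤ ((‖a‖)^(k+1) * r^((k+1)^2)) * (1/2) := mul_le_mul_of_nonneg_left h2 h3
      _ = 1/2 * ((‖a‖)^(k+1) * r^((k+1)^2)) := by ring
  -- assemble
  have hT1 : Tendsto (fun M => ∑ n ∈ range M, ff q a n) atTop
      (nhds (∑' n, ff q a n)) := hsf.hasSum.tendsto_sum_nat
  have hT2 : Tendsto (fun M => ∑ j ∈ range M, (-a)^(j+1) * q^((j+1)^2)) atTop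
      (nhds (∑' k, (-a)^(k+1) * q^((k+1)^2))) := hst.hasSum.tendsto_sum_nat
  have hT3 := hT1.sub hT2
  have e4 : (fun M => (∑ n ∈ range M, ff q a n)
        - ∑ j ∈ range M, (-a)^(j+1) * q^((j+1)^2))
      = fun M => -(∑ j ∈ range M, (-a)^j * q^(j^2) * gg q (a*q^(2*j)) (M-1-j)) := by
    funext M
    rw [key M]
    ring
  rw [e4] at hT3
  have hT4 : Tendsto
      (fun M => -(∑ j ∈ range M, (-a)^j * q^(j^2) * gg q (a*q^(2*j)) (M-1-j)))
      atTop (nhds 0) := by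
    simpa using hWtend.neg
  have h5 : (∑' n, ff q a n) - ∑' k, (-a)^(k+1) * q^((k+1)^2) = 0 :=
    tendsto_nhds_unique hT3 hT4
  have h6 : (∑' n, ff q a n) = ∑' k, (-a)^(k+1) * q^((k+1)^2) := by
    linear_combination h5
  calc ∑' n : ℕ, (-a) ^ (n + 1) * q ^ ((n + 1) * (n + 2) / 2) * qPoch (-q) q n /
        qPoch (a * q ^ 2) (q ^ 2) (n + 1)
      = ∑' n, ff q a n := by rfl
    _ = ∑' k, (-a)^(k+1) * q^((k+1)^2) := h6
end

section
/- Let q be a complex number with 0 < |q| < 1. Then ∑_{n=0}^∞ (q;q²)_n q^n / (−q;q²)_{n+1} = ∑_{n=0}^∞ (−1)^n q^{2n(n+1)}. -/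
open Finset

namespace E933

open Filter

noncomputable def trm (q x : ℂ) (n : ℕ) : ℂ :=
  qPoch x (q^2) n * x ^ n / qPoch (-(x*q^2)) (q^2) n

noncomputable def trb (q x : ℂ) (n : ℕ) : ℂ :=
  qPoch x (q^2) n * x ^ (n+1) * (q^2) ^ n / qPoch (-(x*q^2)) (q^2) n

lemma qPoch_succ (a Q : ℂ) (n : ℕ) :
    qPoch a Q (n+1) = qPoch a Q n * (1 - a * Q^n) := Finset.prod_range_succ _ n

lemma qPoch_succ' (a Q : ℂ) (n : ℕ) :
    qPoch a Q (n+1) = (1 - a) * qPoch (a*Q) Q n := by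
  unfold qPoch
  rw [Finset.prod_range_succ']
  simp only [pow_zero, mul_one]
  rw [mul_comm]
  congr 1
  apply Finset.prod_congr rfl
  intro k _
  ring

variable {q : ℂ}

lemma key_bound (hq1 : ‖q‖ < 1) {a : ℂ} (ha : ‖a‖ ≤ ‖q‖) (j : ℕ) :
    ‖a * (q^2)^j‖ ≤ ‖q‖^(j+1) := by
  have hr0 : (0:ℝ) ≤ ‖q‖ := norm_nonneg q
  rw [norm_mul, norm_pow, norm_pow]
  calc ‖a‖ * (‖q‖^2)^j ≤ ‖q‖ * (‖q‖^2)^j := by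
        apply mul_le_mul_of_nonneg_right ha (by positivity)
    _ = ‖q‖^(2*j+1) := by rw [← pow_mul]; ring
    _ ≤ ‖q‖^(j+1) := pow_le_pow_of_le_one hr0 hq1.le (by omega)

lemma factor_ne_zero (hq1 : ‖q‖ < 1) {a : ℂ} (ha : ‖a‖ ≤ ‖q‖) (j : ℕ) :
    1 - a * (q^2)^j ≠ 0 := by
  intro h
  have h1 : (1:ℂ) = a * (q^2)^j := by linear_combination h
  have h2 : ‖a * (q^2)^j‖ < 1 := by
    calc ‖a * (q^2)^j‖ ≤ ‖q‖^(j+1) := key_bound hq1 ha j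
      _ ≤ ‖q‖^1 := pow_le_pow_of_le_one (norm_nonneg q) hq1.le (by omega)
      _ < 1 := by simpa using hq1
  rw [← h1] at h2
  simp at h2

lemma qPoch_ne_zero (hq1 : ‖q‖ < 1) {a : ℂ} (ha : ‖a‖ ≤ ‖q‖) (n : ℕ) :
    qPoch a (q^2) n ≠ 0 := by
  rw [qPoch]
  exact Finset.prod_ne_zero_iff.2 fun j _ => factor_ne_zero hq1 ha j

lemma geom_bound {r : ℝ} (h0 : 0 ≤ r) (h1 : r < 1) (n : ℕ) :
    ∑ j ∈ range n, r ^ (j+1) ≤ (1-r)⁻¹ := by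
  calc ∑ j ∈ range n, r^(j+1) ≤ ∑ j ∈ range n, r^j :=
        Finset.sum_le_sum fun j _ => pow_le_pow_of_le_one h0 h1.le (Nat.le_succ j)
    _ ≤ ∑' j : ℕ, r^j :=
        Summable.sum_le_tsum _ (fun j _ => by positivity) (summable_geometric_of_lt_one h0 h1)
    _ = (1-r)⁻¹ := tsum_geometric_of_lt_one h0 h1

lemma norm_qPoch_le (hq1 : ‖q‖ < 1) {a : ℂ} (ha : ‖a‖ ≤ ‖q‖) (n : ℕ) :
    ‖qPoch a (q^2) n‖ ≤ Real.exp (1-‖q‖)⁻¹ := by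
  have hr0 : (0:ℝ) ≤ ‖q‖ := norm_nonneg q
  rw [qPoch, norm_prod]
  calc ∏ j ∈ range n, ‖1 - a*(q^2)^j‖ ≤ ∏ j ∈ range n, Real.exp (‖q‖^(j+1)) := by
        apply Finset.prod_le_prod (fun j _ => norm_nonneg _)
        intro j _
        calc ‖1 - a*(q^2)^j‖ ≤ ‖(1:ℂ)‖ + ‖a*(q^2)^j‖ := norm_sub_le _ _
          _ ≤ 1 + ‖q‖^(j+1) := by
              rw [norm_one]; linarith [key_bound hq1 ha j]
          _ ≤ Real.exp (‖q‖^(j+1)) := by linarith [Real.add_one_le_exp (‖q‖^(j+1))]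
    _ = Real.exp (∑ j ∈ range n, ‖q‖^(j+1)) := (Real.exp_sum _ _).symm
    _ ≤ Real.exp (1-‖q‖)⁻¹ := Real.exp_le_exp.2 (geom_bound hr0 hq1 n)

lemma exp_le_one_sub {y : ℝ} (h0 : 0 ≤ y) (h1 : y < 1) :
    Real.exp (-(y/(1-y))) ≤ 1 - y := by
  have hy : 0 < 1 - y := by linarith
  have h2 : (1-y)⁻¹ ≤ Real.exp (y/(1-y)) := by
    have h := Real.add_one_le_exp (y/(1-y))
    have : (1-y)⁻¹ = y/(1-y) + 1 := by field_simp; ring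
    linarith
  calc Real.exp (-(y/(1-y))) = (Real.exp (y/(1-y)))⁻¹ := Real.exp_neg _
    _ ≤ ((1-y)⁻¹)⁻¹ := by
        apply inv_anti₀ (by positivity) h2
    _ = 1 - y := inv_inv _

lemma le_norm_qPoch (hq1 : ‖q‖ < 1) {a : ℂ} (ha : ‖a‖ ≤ ‖q‖) (n : ℕ) :
    Real.exp (-((1-‖q‖)⁻¹ * (1-‖q‖)⁻¹)) ≤ ‖qPoch a (q^2) n‖ := by
  have hr0 : (0:ℝ) ≤ ‖q‖ := norm_nonneg q
  have hr1 : (0:ℝ) < 1 - ‖q‖ := by linarith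
  rw [qPoch, norm_prod]
  have step : ∀ j, Real.exp (-(‖q‖^(j+1) * (1-‖q‖)⁻¹)) ≤ ‖1 - a*(q^2)^j‖ := by
    intro j
    have hj1 : ‖q‖^(j+1) ≤ ‖q‖ := by
      simpa using pow_le_pow_of_le_one hr0 hq1.le (show 1 ≤ j+1 by omega)
    have hjlt : ‖q‖^(j+1) < 1 := lt_of_le_of_lt hj1 hq1
    have h1 : Real.exp (-(‖q‖^(j+1)/(1 - ‖q‖^(j+1)))) ≤ 1 - ‖q‖^(j+1) :=
      exp_le_one_sub (by positivity) hjlt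
    have h2 : ‖q‖^(j+1)/(1-‖q‖^(j+1)) ≤ ‖q‖^(j+1) * (1-‖q‖)⁻¹ := by
      rw [div_eq_mul_inv]
      apply mul_le_mul_of_nonneg_left _ (by positivity)
      apply inv_anti₀ hr1
      linarith
    have h3 : Real.exp (-(‖q‖^(j+1) * (1-‖q‖)⁻¹)) ≤ 1 - ‖q‖^(j+1) := by
      refine le_trans ?_ h1
      exact Real.exp_le_exp.2 (by linarith)
    refine h3.trans ?_
    calc 1 - ‖q‖^(j+1) ≤ 1 - ‖a*(q^2)^j‖ := by linarith [key_bound hq1 ha j]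
      _ ≤ ‖1 - a*(q^2)^j‖ := by
          have := norm_sub_norm_le (1:ℂ) (a*(q^2)^j)
          simpa using this
  calc Real.exp (-((1-‖q‖)⁻¹*(1-‖q‖)⁻¹))
      ≤ Real.exp (-(∑ j ∈ range n, ‖q‖^(j+1) * (1-‖q‖)⁻¹)) := by
        apply Real.exp_le_exp.2
        rw [neg_le_neg_iff, ← Finset.sum_mul]
        exact mul_le_mul_of_nonneg_right (geom_bound hr0 hq1 n) (by positivity)
    _ = ∏ j ∈ range n, Real.exp (-(‖q‖^(j+1)*(1-‖q‖)⁻¹)) := by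
        rw [← Real.exp_sum, ← Finset.sum_neg_distrib]
    _ ≤ ∏ j ∈ range n, ‖1 - a*(q^2)^j‖ :=
        Finset.prod_le_prod (fun j _ => (Real.exp_pos _).le) (fun j _ => step j)

noncomputable def Kq (r : ℝ) : ℝ := Real.exp (1-r)⁻¹ * Real.exp ((1-r)⁻¹ * (1-r)⁻¹)

lemma Kq_pos (r : ℝ) : 0 < Kq r := by unfold Kq; positivity

lemma norm_trm_le (hq1 : ‖q‖ < 1) {x : ℂ} (hx : ‖x‖ ≤ ‖q‖) (n : ℕ) :
    ‖trm q x n‖ ≤ Kq ‖q‖ * ‖q‖^n := by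
  have hr0 : (0:ℝ) ≤ ‖q‖ := norm_nonneg q
  have hx2 : ‖-(x*q^2)‖ ≤ ‖q‖ := by
    rw [norm_neg, norm_mul, norm_pow]
    calc ‖x‖ * ‖q‖^2 ≤ ‖q‖ * 1 := by
          apply mul_le_mul hx _ (by positivity) hr0
          calc ‖q‖^2 ≤ 1^2 := by apply pow_le_pow_left₀ hr0 hq1.le
            _ = 1 := one_pow 2
      _ = ‖q‖ := mul_one _
  rw [trm, norm_div, norm_mul, norm_pow]
  have h1 := norm_qPoch_le hq1 hx n
  have h2 := le_norm_qPoch hq1 hx2 n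
  have hnum : ‖qPoch x (q^2) n‖ * ‖x‖^n ≤ Real.exp (1-‖q‖)⁻¹ * ‖q‖^n := by
    apply mul_le_mul h1 (pow_le_pow_left₀ (norm_nonneg x) hx n) (by positivity)
    positivity
  calc ‖qPoch x (q^2) n‖ * ‖x‖^n / ‖qPoch (-(x*q^2)) (q^2) n‖
      ≤ (Real.exp (1-‖q‖)⁻¹ * ‖q‖^n) / Real.exp (-((1-‖q‖)⁻¹ * (1-‖q‖)⁻¹)) := by
        apply div_le_div₀ (by positivity) hnum (Real.exp_pos _) h2
    _ = Kq ‖q‖ * ‖q‖^n := by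
        rw [Kq, Real.exp_neg, div_eq_mul_inv, inv_inv]; ring

lemma norm_trb_le (hq1 : ‖q‖ < 1) {x : ℂ} (hx : ‖x‖ ≤ ‖q‖) (n : ℕ) :
    ‖trb q x n‖ ≤ Kq ‖q‖ * ‖q‖^n := by
  have hr0 : (0:ℝ) ≤ ‖q‖ := norm_nonneg q
  have hb : ‖trb q x n‖ = ‖trm q x n‖ * (‖x‖ * (‖q‖^2)^n) := by
    rw [trb, trm, norm_div, norm_div, norm_mul, norm_mul, norm_mul, norm_pow, norm_pow,
      norm_pow, norm_pow]
    rw [pow_succ]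
    ring
  rw [hb]
  have h1 : ‖x‖ * (‖q‖^2)^n ≤ 1 := by
    have hq : ‖q‖ ≤ 1 := hq1.le
    have hx1 : ‖x‖ ≤ 1 := hx.trans hq
    have h2 : (‖q‖^2)^n ≤ 1 := by
      apply pow_le_one₀ (by positivity)
      calc ‖q‖^2 ≤ 1^2 := by apply pow_le_pow_left₀ hr0 hq
        _ = 1 := one_pow 2
    calc ‖x‖ * (‖q‖^2)^n ≤ 1 * 1 := by
          apply mul_le_mul hx1 h2 (by positivity) (by norm_num)
      _ = 1 := by norm_num
  calc ‖trm q x n‖ * (‖x‖ * (‖q‖^2)^n) ≤ (Kq ‖q‖ * ‖q‖^n) * 1 := by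
        apply mul_le_mul (norm_trm_le hq1 hx n) h1 (by positivity)
        have := Kq_pos ‖q‖
        positivity
    _ = Kq ‖q‖ * ‖q‖^n := mul_one _

lemma summable_trm (hq1 : ‖q‖ < 1) {x : ℂ} (hx : ‖x‖ ≤ ‖q‖) : Summable (trm q x) := by
  apply Summable.of_norm_bounded ((summable_geometric_of_lt_one (norm_nonneg q) hq1).mul_left (Kq ‖q‖))
  exact norm_trm_le hq1 hx

lemma summable_trb (hq1 : ‖q‖ < 1) {x : ℂ} (hx : ‖x‖ ≤ ‖q‖) : Summable (trb q x) := by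
  apply Summable.of_norm_bounded ((summable_geometric_of_lt_one (norm_nonneg q) hq1).mul_left (Kq ‖q‖))
  exact norm_trb_le hq1 hx

lemma norm_tsum_trm_le (hq1 : ‖q‖ < 1) {x : ℂ} (hx : ‖x‖ ≤ ‖q‖) :
    ‖∑' n, trm q x n‖ ≤ Kq ‖q‖ * (1-‖q‖)⁻¹ := by
  have hs : Summable fun n => Kq ‖q‖ * ‖q‖^n :=
    (summable_geometric_of_lt_one (norm_nonneg q) hq1).mul_left (Kq ‖q‖)
  calc ‖∑' n, trm q x n‖ ≤ ∑' n, Kq ‖q‖ * ‖q‖^n :=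
        by
          have hns : Summable fun n => ‖trm q x n‖ :=
            Summable.of_nonneg_of_le (fun n => norm_nonneg _) (norm_trm_le hq1 hx) hs
          exact (norm_tsum_le_tsum_norm hns).trans
            (Summable.tsum_le_tsum (norm_trm_le hq1 hx) hns hs)
    _ = Kq ‖q‖ * (1-‖q‖)⁻¹ := by
        rw [tsum_mul_left, tsum_geometric_of_lt_one (norm_nonneg q) hq1]

lemma telescope (hq1 : ‖q‖ < 1) {x : ℂ} (hx : ‖x‖ ≤ ‖q‖) (N : ℕ) :
    ∑ n ∈ range (N+1), (trm q x n + ((1+x)/(1-x)) * trb q x n)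
      = (1+x) + (1+x)*x/(1-x)
        - qPoch x (q^2) (N+1) * x^(N+1) / ((1-x) * qPoch (-(x*q^2)) (q^2) N) := by
  have h1x : (1:ℂ) - x ≠ 0 := by
    have := factor_ne_zero hq1 hx 0
    simpa using this
  have hxq : ‖-(x*q^2)‖ ≤ ‖q‖ := by
    rw [norm_neg, norm_mul, norm_pow]
    calc ‖x‖ * ‖q‖^2 ≤ ‖q‖ * 1 := by
          apply mul_le_mul hx _ (by positivity) (norm_nonneg q)
          calc ‖q‖^2 ≤ 1^2 := by apply pow_le_pow_left₀ (norm_nonneg q) hq1.le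
            _ = 1 := one_pow 2
      _ = ‖q‖ := mul_one _
  induction N with
  | zero =>
      simp only [range_one, sum_singleton, trm, trb, qPoch_succ]
      simp [qPoch]
      field_simp
      ring
  | succ N ih =>
      rw [Finset.sum_range_succ, ih]
      have hden : qPoch (-(x*q^2)) (q^2) N ≠ 0 := qPoch_ne_zero hq1 hxq N
      have hfac : 1 - (-(x*q^2)) * (q^2)^N ≠ 0 := factor_ne_zero hq1 hxq N
      have hfac2 : (1:ℂ) + x*q^2*(q^2)^N ≠ 0 := by
        intro h; apply hfac; linear_combination h
      have hrw : qPoch (-(x*q^2)) (q^2) (N+1)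
          = qPoch (-(x*q^2)) (q^2) N * (1 + x*q^2*(q^2)^N) := by
        rw [qPoch_succ]; ring
      rw [trm, trb, hrw, qPoch_succ x (q^2) (N+1),
        pow_succ x (N+1), pow_succ (q^2) N]
      set P := qPoch x (q^2) (N+1) with hP
      set D := qPoch (-(x*q^2)) (q^2) N with hD
      set Y := ((q^2 : ℂ))^N with hY
      set X := x^(N+1) with hX
      have hu : ((1:ℂ)-x)⁻¹*(1-x) = 1 := inv_mul_cancel₀ h1x
      have hw2 : ((1:ℂ)+x*q^2*Y)⁻¹*(1+x*q^2*Y) = 1 := inv_mul_cancel₀ hfac2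
      simp only [div_eq_mul_inv, mul_inv]
      linear_combination (P*X*D⁻¹*((1:ℂ)-x)⁻¹)*hw2 - (P*X*D⁻¹*((1:ℂ)+x*q^2*Y)⁻¹)*hu

lemma tsum_ab (hq1 : ‖q‖ < 1) {x : ℂ} (hx : ‖x‖ ≤ ‖q‖) :
    (∑' n, trm q x n) + ((1+x)/(1-x)) * (∑' n, trb q x n)
      = (1+x) + (1+x)*x/(1-x) := by
  have hr0 : (0:ℝ) ≤ ‖q‖ := norm_nonneg q
  have h1x : (1:ℂ) - x ≠ 0 := by
    have := factor_ne_zero hq1 hx 0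
    simpa using this
  have h1xn : ‖(1:ℂ) - x‖ ≠ 0 := norm_ne_zero_iff.2 h1x
  have h1xp : 0 < ‖(1:ℂ) - x‖ := norm_pos_iff.2 h1x
  have hsa : Summable (trm q x) := summable_trm hq1 hx
  have hsb : Summable (trb q x) := summable_trb hq1 hx
  have hsum : Summable (fun n => trm q x n + ((1+x)/(1-x)) * trb q x n) :=
    hsa.add (hsb.mul_left _)
  have h1 : Tendsto (fun N => ∑ n ∈ range N, (trm q x n + ((1+x)/(1-x)) * trb q x n))
      atTop (nhds (∑' n, (trm q x n + ((1+x)/(1-x)) * trb q x n))) :=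
    hsum.hasSum.tendsto_sum_nat
  have h1' := h1.comp (tendsto_add_atTop_nat 1)
  have hv : Tendsto
      (fun N => qPoch x (q^2) (N+1) * x^(N+1) / ((1-x) * qPoch (-(x*q^2)) (q^2) N))
      atTop (nhds 0) := by
    apply squeeze_zero_norm
      (a := fun N => (Kq ‖q‖ / ‖(1:ℂ)-x‖ * ‖q‖) * ‖q‖^N)
    · intro N
      have hxq : ‖-(x*q^2)‖ ≤ ‖q‖ := by
        rw [norm_neg, norm_mul, norm_pow]
        calc ‖x‖ * ‖q‖^2 ≤ ‖q‖ * 1 := by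
              apply mul_le_mul hx _ (by positivity) hr0
              calc ‖q‖^2 ≤ 1^2 := by apply pow_le_pow_left₀ hr0 hq1.le
                _ = 1 := one_pow 2
          _ = ‖q‖ := mul_one _
      have hnum : ‖qPoch x (q^2) (N+1) * x^(N+1)‖ ≤ Real.exp (1-‖q‖)⁻¹ * ‖q‖^(N+1) := by
        rw [norm_mul, norm_pow]
        apply mul_le_mul (norm_qPoch_le hq1 hx (N+1))
          (pow_le_pow_left₀ (norm_nonneg x) hx (N+1)) (by positivity) (by positivity)
      have hden : Real.exp (-((1-‖q‖)⁻¹ * (1-‖q‖)⁻¹)) * ‖(1:ℂ)-x‖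
          ≤ ‖(1-x) * qPoch (-(x*q^2)) (q^2) N‖ := by
        rw [norm_mul, mul_comm]
        apply mul_le_mul_of_nonneg_left (le_norm_qPoch hq1 hxq N) (norm_nonneg _)
      rw [norm_div]
      calc ‖qPoch x (q^2) (N+1) * x^(N+1)‖ / ‖(1-x) * qPoch (-(x*q^2)) (q^2) N‖
          ≤ (Real.exp (1-‖q‖)⁻¹ * ‖q‖^(N+1))
            / (Real.exp (-((1-‖q‖)⁻¹ * (1-‖q‖)⁻¹)) * ‖(1:ℂ)-x‖) := by
            apply div_le_div₀ (by positivity) hnum (by positivity) hden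
        _ = (Kq ‖q‖ / ‖(1:ℂ)-x‖ * ‖q‖) * ‖q‖^N := by
            rw [Kq, Real.exp_neg, pow_succ]
            field_simp
    · have := (tendsto_pow_atTop_nhds_zero_of_lt_one hr0 hq1).const_mul
        (Kq ‖q‖ / ‖(1:ℂ)-x‖ * ‖q‖)
      simpa using this
  have h2 : Tendsto (fun N => ∑ n ∈ range (N+1), (trm q x n + ((1+x)/(1-x)) * trb q x n))
      atTop (nhds ((1+x) + (1+x)*x/(1-x))) := by
    have heq : (fun N => ∑ n ∈ range (N+1), (trm q x n + ((1+x)/(1-x)) * trb q x n))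
        = fun N => (1+x) + (1+x)*x/(1-x)
          - qPoch x (q^2) (N+1) * x^(N+1) / ((1-x) * qPoch (-(x*q^2)) (q^2) N) := by
      funext N; exact telescope hq1 hx N
    rw [heq]
    simpa using tendsto_const_nhds.sub hv
  have h12 : (∑' n, (trm q x n + ((1+x)/(1-x)) * trb q x n))
      = (1+x) + (1+x)*x/(1-x) := by
    apply tendsto_nhds_unique _ h2
    exact h1'
  rw [← h12, Summable.tsum_add hsa (hsb.mul_left _), tsum_mul_left]

lemma func_eq (hq1 : ‖q‖ < 1) {x : ℂ} (hx : ‖x‖ ≤ ‖q‖) :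
    (∑' n, trm q x n)
      = (1+x) - (1+x) * (x^2*q^2) / (1+x*q^2) * ∑' n, trm q (x*q^2) n := by
  have hr0 : (0:ℝ) ≤ ‖q‖ := norm_nonneg q
  have hq2le : ‖q‖^2 ≤ 1 := by
    calc ‖q‖^2 ≤ 1^2 := by apply pow_le_pow_left₀ hr0 hq1.le
      _ = 1 := one_pow 2
  have hx2 : ‖x*q^2‖ ≤ ‖q‖ := by
    rw [norm_mul, norm_pow]
    calc ‖x‖ * ‖q‖^2 ≤ ‖q‖ * 1 := mul_le_mul hx hq2le (by positivity) hr0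
      _ = ‖q‖ := mul_one _
  have hx4 : ‖-(x*q^2*q^2)‖ ≤ ‖q‖ := by
    rw [norm_neg, norm_mul, norm_pow]
    calc ‖x*q^2‖ * ‖q‖^2 ≤ ‖q‖ * 1 := mul_le_mul hx2 hq2le (by positivity) hr0
      _ = ‖q‖ := mul_one _
  have h1x : (1:ℂ) - x ≠ 0 := by
    have := factor_ne_zero hq1 hx 0; simpa using this
  have h1xq : (1:ℂ) + x*q^2 ≠ 0 := by
    have : ‖-(x*q^2)‖ ≤ ‖q‖ := by rwa [norm_neg]
    have := factor_ne_zero hq1 this 0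
    simp only [pow_zero, mul_one] at this
    intro h; apply this; linear_combination h
  have hsb : Summable (trb q x) := summable_trb hq1 hx
  have key := tsum_ab hq1 hx
  have hb0 : trb q x 0 = x := by simp [trb, qPoch]
  have hshift : ∀ n : ℕ, trb q x (n+1)
      = ((1-x) * (x^2*q^2) / (1+x*q^2)) * trm q (x*q^2) n := by
    intro n
    have hden : qPoch (-(x*q^2*q^2)) (q^2) n ≠ 0 := qPoch_ne_zero hq1 hx4 n
    have e1 : qPoch x (q^2) (n+1) = (1-x) * qPoch (x*q^2) (q^2) n := qPoch_succ' x (q^2) n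
    have e2 : qPoch (-(x*q^2)) (q^2) (n+1)
        = (1+x*q^2) * qPoch (-(x*q^2*q^2)) (q^2) n := by
      have h := qPoch_succ' (-(x*q^2)) (q^2) n
      rw [h]
      ring_nf
    rw [trb, trm, e1, e2]
    have : -(x*q^2) * q^2 = -(x*q^2*q^2) := by ring
    field_simp
    ring
  have htb : (∑' n, trb q x n)
      = x + ((1-x) * (x^2*q^2) / (1+x*q^2)) * ∑' n, trm q (x*q^2) n := by
    rw [Summable.tsum_eq_zero_add hsb, hb0]
    congr 1
    rw [← tsum_mul_left]
    exact tsum_congr hshift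
  have hcd : ((1+x)/(1-x)) * ((1-x) * (x^2*q^2) / (1+x*q^2))
      = (1+x) * (x^2*q^2) / (1+x*q^2) := by
    field_simp
  have hH : (∑' n, trm q x n) = (1+x) + (1+x)*x/(1-x)
      - ((1+x)/(1-x)) * (∑' n, trb q x n) := by
    linear_combination key
  rw [hH, htb, mul_add, ← mul_assoc, hcd]
  have hcx : ((1+x)/(1-x)) * x = (1+x)*x/(1-x) := by ring
  rw [hcx]
  ring

variable (q) in
noncomputable def g (N : ℕ) : ℂ :=
  (∑' n, trm q (q^(2*N+1)) n) / (1 + q^(2*N+1))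

lemma norm_orbit (hq1 : ‖q‖ < 1) (N : ℕ) : ‖q^(2*N+1)‖ ≤ ‖q‖ := by
  rw [norm_pow]
  simpa using pow_le_pow_of_le_one (norm_nonneg q) hq1.le (show 1 ≤ 2*N+1 by omega)

lemma one_add_orbit_ne (hq1 : ‖q‖ < 1) (N : ℕ) : (1:ℂ) + q^(2*N+1) ≠ 0 := by
  have h := factor_ne_zero hq1 (a := -(q^(2*N+1))) (by rw [norm_neg]; exact norm_orbit hq1 N) 0
  simp only [pow_zero, mul_one] at h
  intro hc; apply h; linear_combination hc

lemma gstep (hq1 : ‖q‖ < 1) (N : ℕ) : g q N = 1 - q^(4*N+4) * g q (N+1) := by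
  have hfe := func_eq hq1 (norm_orbit hq1 N)
  have hpow : q^(2*N+1) * q^2 = q^(2*(N+1)+1) := by
    have h : 2*N+1+2 = 2*(N+1)+1 := by omega
    rw [← pow_add, h]
  rw [hpow] at hfe
  have hpow2 : (q^(2*N+1))^2 * q^2 = q^(4*N+4) := by
    have h : (2*N+1)*2+2 = 4*N+4 := by omega
    rw [← pow_mul, ← pow_add, h]
  rw [hpow2] at hfe
  have h1 : (1:ℂ) + q^(2*N+1) ≠ 0 := one_add_orbit_ne hq1 N
  have h2 : (1:ℂ) + q^(2*(N+1)+1) ≠ 0 := one_add_orbit_ne hq1 (N+1)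
  rw [g, g, hfe]
  field_simp

lemma giter (hq1 : ‖q‖ < 1) (N : ℕ) :
    g q 0 = ∑ k ∈ range N, (-1)^k * q^(2*k*(k+1)) + (-1)^N * q^(2*N*(N+1)) * g q N := by
  induction N with
  | zero => simp
  | succ N ih =>
      rw [Finset.sum_range_succ]
      have e : q^(2*N*(N+1)) * q^(4*N+4) = q^(2*(N+1)*(N+2)) := by
        have h : 2*N*(N+1)+(4*N+4) = 2*(N+1)*(N+2) := by ring
        rw [← pow_add, h]
      rw [ih, gstep hq1 N]
      linear_combination ((-1:ℂ)^(N+1) * g q (N+1)) * e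

lemma gbound (hq1 : ‖q‖ < 1) (N : ℕ) :
    ‖g q N‖ ≤ Kq ‖q‖ * (1-‖q‖)⁻¹ / (1-‖q‖) := by
  have hr1 : (0:ℝ) < 1 - ‖q‖ := by linarith
  have hden : 1 - ‖q‖ ≤ ‖(1:ℂ) + q^(2*N+1)‖ := by
    have h1 : ‖q^(2*N+1)‖ ≤ ‖q‖ := norm_orbit hq1 N
    have h2 := norm_sub_norm_le (1:ℂ) (-(q^(2*N+1)))
    simp only [norm_one, norm_neg, sub_neg_eq_add] at h2
    linarith
  rw [g, norm_div]
  have hKq := Kq_pos ‖q‖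
  apply div_le_div₀ (by positivity)
    (norm_tsum_trm_le hq1 (norm_orbit hq1 N)) hr1 hden

theorem main (hq1 : ‖q‖ < 1) :
    ∑' n : ℕ, qPoch q (q ^ 2) n * q ^ n / qPoch (-q) (q ^ 2) (n + 1)
    = ∑' n : ℕ, (-1) ^ n * q ^ (2 * n * (n + 1)) := by
  have hr0 : (0:ℝ) ≤ ‖q‖ := norm_nonneg q
  have hq : ‖q‖ ≤ ‖q‖ := le_refl _
  -- LHS = g q 0
  have hterm : ∀ n : ℕ, qPoch q (q ^ 2) n * q ^ n / qPoch (-q) (q ^ 2) (n + 1)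
      = trm q q n / (1 + q) := by
    intro n
    have e : qPoch (-q) (q^2) (n+1) = (1+q) * qPoch (-(q*q^2)) (q^2) n := by
      have h := qPoch_succ' (-q) (q^2) n
      rw [h]; ring_nf
    rw [e, trm, div_div]
    ring
  have hLg : (∑' n : ℕ, qPoch q (q ^ 2) n * q ^ n / qPoch (-q) (q ^ 2) (n + 1)) = g q 0 := by
    rw [tsum_congr hterm, tsum_div_const, g]
    norm_num
  -- RHS summable
  have hRnorm : ∀ k : ℕ, ‖(-1:ℂ)^k * q^(2*k*(k+1))‖ ≤ ‖q‖^k := by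
    intro k
    rw [norm_mul, norm_pow, norm_pow, norm_neg, norm_one, one_pow, one_mul]
    exact pow_le_pow_of_le_one hr0 hq1.le (by nlinarith)
  have hRsum : Summable (fun k : ℕ => (-1:ℂ)^k * q^(2*k*(k+1))) :=
    Summable.of_norm_bounded (summable_geometric_of_lt_one hr0 hq1) hRnorm
  -- partial sums of RHS tend to g q 0
  have hB : ∀ N : ℕ, ‖(-1:ℂ)^N * q^(2*N*(N+1)) * g q N‖
      ≤ (Kq ‖q‖ * (1-‖q‖)⁻¹ / (1-‖q‖)) * ‖q‖^N := by
    intro N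
    rw [norm_mul]
    have h1 := hRnorm N
    have h2 := gbound hq1 N
    have hBpos : (0:ℝ) ≤ Kq ‖q‖ * (1-‖q‖)⁻¹ / (1-‖q‖) := by
      have := Kq_pos ‖q‖
      have hr1 : (0:ℝ) < 1 - ‖q‖ := by linarith
      positivity
    calc ‖(-1:ℂ)^N * q^(2*N*(N+1))‖ * ‖g q N‖
        ≤ ‖q‖^N * (Kq ‖q‖ * (1-‖q‖)⁻¹ / (1-‖q‖)) :=
          mul_le_mul h1 h2 (norm_nonneg _) (by positivity)
      _ = (Kq ‖q‖ * (1-‖q‖)⁻¹ / (1-‖q‖)) * ‖q‖^N := by ring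
  have hv : Filter.Tendsto (fun N => (-1:ℂ)^N * q^(2*N*(N+1)) * g q N)
      Filter.atTop (nhds 0) := by
    apply squeeze_zero_norm hB
    have := (tendsto_pow_atTop_nhds_zero_of_lt_one hr0 hq1).const_mul
      (Kq ‖q‖ * (1-‖q‖)⁻¹ / (1-‖q‖))
    simpa using this
  have hps : Filter.Tendsto (fun N => ∑ k ∈ range N, (-1:ℂ)^k * q^(2*k*(k+1)))
      Filter.atTop (nhds (g q 0)) := by
    have heq : (fun N => ∑ k ∈ range N, (-1:ℂ)^k * q^(2*k*(k+1)))
        = fun N => g q 0 - (-1:ℂ)^N * q^(2*N*(N+1)) * g q N := by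
      funext N
      have := giter hq1 N
      linear_combination -this
    rw [heq]
    simpa using tendsto_const_nhds.sub hv
  have hRg : (∑' k : ℕ, (-1:ℂ)^k * q^(2*k*(k+1))) = g q 0 :=
    tendsto_nhds_unique hRsum.hasSum.tendsto_sum_nat hps
  rw [hLg, ← hRg]

end E933

/-- Entry 9.3.3 of Andrews–Berndt. -/
theorem entry_933 (q : ℂ) (hq0 : 0 < ‖q‖) (hq1 : ‖q‖ < 1) :
    ∑' n : ℕ, qPoch q (q ^ 2) n * q ^ n / qPoch (-q) (q ^ 2) (n + 1)
    = ∑' n : ℕ, (-1) ^ n * q ^ (2 * n * (n + 1)) := by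
  exact E933.main hq1
end

section
/- Let q be a complex number with 0 < |q| < 1. Then ∑_{n=0}^∞ (−1)^n q^{n(n+1)/2} / (−q;q)_n = ∑_{n=0}^∞ q^{n(3n+1)/2} (1 − q^{2n+1}). -/
open Finset

namespace Entry942

open Filter Topology

/-- `(−q;q)_n` written with positive signs. -/
noncomputable def P (q : ℂ) (n : ℕ) : ℂ := ∏ j ∈ Finset.range n, (1 + q ^ (j + 1))

lemma P_eq (q : ℂ) (n : ℕ) : qPoch (-q) q n = P q n := by
  unfold qPoch P
  exact Finset.prod_congr rfl fun j _ => by ring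

lemma P_zero (q : ℂ) : P q 0 = 1 := by simp [P]

lemma P_succ (q : ℂ) (n : ℕ) : P q (n + 1) = P q n * (1 + q ^ (n + 1)) :=
  Finset.prod_range_succ _ _

variable {q : ℂ}

lemma one_add_ne (hq : ‖q‖ < 1) (n : ℕ) : 1 + q ^ (n + 1) ≠ 0 := by
  intro h
  have h1 : q ^ (n + 1) = -1 := by linear_combination h
  have h2 : ‖q ^ (n + 1)‖ < 1 := by
    rw [norm_pow]
    exact pow_lt_one₀ (norm_nonneg q) hq (Nat.succ_ne_zero n)
  rw [h1] at h2
  simp at h2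

lemma P_ne (hq : ‖q‖ < 1) (n : ℕ) : P q n ≠ 0 := by
  induction n with
  | zero => simp [P]
  | succ n ih => rw [P_succ]; exact mul_ne_zero ih (one_add_ne hq n)

lemma norm_one_add_ge (hq : ‖q‖ < 1) (n : ℕ) : 1 - ‖q‖ ≤ ‖1 + q ^ (n + 1)‖ := by
  have h1 := norm_add_le (1 + q ^ (n + 1)) (-(q ^ (n + 1)))
  have e : (1 + q ^ (n + 1)) + (-(q ^ (n + 1))) = 1 := by ring
  rw [e, norm_neg, norm_one, norm_pow] at h1
  have h2 : ‖q‖ ^ (n + 1) ≤ ‖q‖ := by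
    calc ‖q‖ ^ (n + 1) ≤ ‖q‖ ^ 1 :=
      pow_le_pow_of_le_one (norm_nonneg q) hq.le (by omega)
    _ = ‖q‖ := pow_one _
  linarith

lemma P_norm_le (hq : ‖q‖ < 1) (n : ℕ) : ‖P q n‖ ≤ 2 ^ n := by
  unfold P
  rw [norm_prod]
  calc ∏ j ∈ range n, ‖1 + q ^ (j + 1)‖ ≤ ∏ j ∈ range n, 2 := by
        apply Finset.prod_le_prod (fun j _ => norm_nonneg _)
        intro j _
        have h2 : ‖q ^ (j + 1)‖ ≤ 1 := by
          rw [norm_pow]; exact pow_le_one₀ (norm_nonneg q) hq.le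
        calc ‖1 + q ^ (j + 1)‖ ≤ ‖(1 : ℂ)‖ + ‖q ^ (j + 1)‖ := norm_add_le _ _
        _ ≤ 2 := by rw [norm_one]; linarith
  _ = 2 ^ n := by rw [prod_const, card_range]

lemma P_norm_ge (hq : ‖q‖ < 1) (n : ℕ) : (1 - ‖q‖) ^ n ≤ ‖P q n‖ := by
  unfold P
  rw [norm_prod]
  calc (1 - ‖q‖) ^ n = ∏ _j ∈ range n, (1 - ‖q‖) := by rw [prod_const, card_range]
  _ ≤ ∏ j ∈ range n, ‖1 + q ^ (j + 1)‖ :=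
      Finset.prod_le_prod (fun j _ => by linarith) (fun j _ => norm_one_add_ge hq j)

lemma texp (N : ℕ) : (N + 2) * (N + 3) / 2 = (N + 1) * (N + 2) / 2 + (N + 2) := by
  have h : (N + 2) * (N + 3) = (N + 1) * (N + 2) + 2 * (N + 2) := by ring
  rw [h, Nat.add_mul_div_left _ _ (by norm_num : 0 < 2)]

lemma texp' (n : ℕ) : (n + 1) * (n + 2) / 2 = n * (n + 1) / 2 + (n + 1) := by
  have h : (n + 1) * (n + 2) = n * (n + 1) + 2 * (n + 1) := by ring
  rw [h, Nat.add_mul_div_left _ _ (by norm_num : 0 < 2)]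

lemma eexp (N : ℕ) :
    (N + 1) * (3 * (N + 1) + 1) / 2 = (N + 1) * (N + 2) / 2 + (N + 1) * (N + 1) := by
  have h : (N + 1) * (3 * (N + 1) + 1) = (N + 1) * (N + 2) + 2 * ((N + 1) * (N + 1)) := by
    ring
  rw [h, Nat.add_mul_div_left _ _ (by norm_num : 0 < 2)]

/-- The crucial telescoping identity. -/
lemma tel (q : ℂ) (N : ℕ) :
    (1 + q ^ (N + 1)) * (∑ k ∈ range (N + 1), (-1) ^ k * q ^ ((N + 1) * k) * P q k)
      + q ^ (N + 2) * (∑ k ∈ range (N + 1), (-1) ^ k * q ^ ((N + 2) * k) * P q k)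
    = 1 - (-1) ^ (N + 1) * q ^ ((N + 1) * (N + 1)) * P q (N + 1) := by
  have h := Finset.sum_range_sub' (f := fun k => (-1 : ℂ) ^ k * q ^ ((N + 1) * k) * P q k)
    (N + 1)
  rw [Finset.mul_sum, Finset.mul_sum, ← Finset.sum_add_distrib]
  have h2 : ∀ k ∈ range (N + 1),
      (1 + q ^ (N + 1)) * ((-1) ^ k * q ^ ((N + 1) * k) * P q k)
        + q ^ (N + 2) * ((-1) ^ k * q ^ ((N + 2) * k) * P q k)
      = (fun k => (-1 : ℂ) ^ k * q ^ ((N + 1) * k) * P q k) k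
        - (fun k => (-1 : ℂ) ^ k * q ^ ((N + 1) * k) * P q k) (k + 1) := by
    intro k _
    simp only
    rw [P_succ]
    ring
  rw [Finset.sum_congr rfl h2, h]
  simp only [P_zero]
  ring

/-- The key finite identity, proved by induction. -/
lemma key (hq : ‖q‖ < 1) (N : ℕ) :
    ((∑ n ∈ range (N + 1), (-1) ^ n * q ^ (n * (n + 1) / 2) / P q n)
      - ∑ n ∈ range (N + 1), q ^ (n * (3 * n + 1) / 2) * (1 - q ^ (2 * n + 1))) * P q N
    = (-1) ^ N * q ^ ((N + 1) * (N + 2) / 2)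
        * ∑ k ∈ range (N + 1), (-1) ^ k * q ^ ((N + 1) * k) * P q k := by
  induction N with
  | zero => norm_num [P_zero]
  | succ N ih =>
    rw [sum_range_succ (f := fun n => (-1 : ℂ) ^ n * q ^ (n * (n + 1) / 2) / P q n),
      sum_range_succ (f := fun n => q ^ (n * (3 * n + 1) / 2) * (1 - q ^ (2 * n + 1))),
      sum_range_succ (f := fun k => (-1 : ℂ) ^ k * q ^ ((N + 1 + 1) * k) * P q k)]
    have htel := tel q N
    have hPne : P q N * (1 + q ^ (N + 1)) ≠ 0 :=
      mul_ne_zero (P_ne hq N) (one_add_ne hq N)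
    rw [P_succ]
    have e1 : (N + 1) * ((N + 1) + 1) / 2 = (N + 1) * (N + 2) / 2 := rfl
    have e2 : q ^ ((N + 1) * (3 * (N + 1) + 1) / 2)
        = q ^ ((N + 1) * (N + 2) / 2) * q ^ ((N + 1) * (N + 1)) := by
      rw [eexp, pow_add]
    have e3 : q ^ ((N + 1 + 1) * (N + 1 + 2) / 2)
        = q ^ ((N + 1) * (N + 2) / 2) * q ^ (N + 2) := by
      have h4 : (N + 1 + 1) * (N + 1 + 2) = (N + 1) * (N + 2) + 2 * (N + 2) := by ring
      rw [h4, Nat.add_mul_div_left _ _ (by norm_num : 0 < 2), pow_add]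
    rw [e1, e2, e3]
    have hcancel : (-1 : ℂ) ^ (N + 1) * q ^ ((N + 1) * (N + 2) / 2)
        / (P q N * (1 + q ^ (N + 1))) * (P q N * (1 + q ^ (N + 1)))
        = (-1 : ℂ) ^ (N + 1) * q ^ ((N + 1) * (N + 2) / 2) :=
      div_mul_cancel₀ _ hPne
    rw [P_succ] at htel
    rcases Nat.even_or_odd N with hN | hN
    · have h5 : (-1 : ℂ) ^ N = 1 := hN.neg_one_pow
      have h6 : (-1 : ℂ) ^ (N + 1) = -1 := hN.add_one.neg_one_pow
      rw [h5] at ih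
      rw [h6] at htel hcancel ⊢
      linear_combination (1 + q ^ (N + 1)) * ih + hcancel
        + q ^ ((N + 1) * (N + 2) / 2) * htel
    · have h5 : (-1 : ℂ) ^ N = -1 := hN.neg_one_pow
      have h6 : (-1 : ℂ) ^ (N + 1) = 1 := hN.add_one.neg_one_pow
      rw [h5] at ih
      rw [h6] at htel hcancel ⊢
      linear_combination (1 + q ^ (N + 1)) * ih + hcancel
        - q ^ ((N + 1) * (N + 2) / 2) * htel

/-- Summability of the left-hand series. -/
lemma summableA (hq : ‖q‖ < 1) :
    Summable (fun n : ℕ => (-1) ^ n * q ^ (n * (n + 1) / 2) / P q n) := by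
  set a : ℕ → ℂ := fun n => (-1) ^ n * q ^ (n * (n + 1) / 2) / P q n with ha
  have hrec : ∀ n : ℕ, a (n + 1) = a n * (-(q ^ (n + 1)) / (1 + q ^ (n + 1))) := by
    intro n
    have e : q ^ ((n + 1) * (n + 1 + 1) / 2) = q ^ (n * (n + 1) / 2) * q ^ (n + 1) := by
      rw [show (n + 1) * (n + 1 + 1) / 2 = n * (n + 1) / 2 + (n + 1) from texp' n, pow_add]
    simp only [ha, P_succ, e]
    rw [div_mul_div_comm]
    rw [div_eq_div_iff (mul_ne_zero (P_ne hq n) (one_add_ne hq n))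
      (mul_ne_zero (P_ne hq n) (one_add_ne hq n))]
    ring
  have hev : ∀ᶠ n : ℕ in atTop, ‖a (n + 1)‖ ≤ (1 / 2 : ℝ) * ‖a n‖ := by
    have ht : Tendsto (fun n : ℕ => ‖q‖ ^ (n + 1) / (1 - ‖q‖)) atTop (𝓝 0) := by
      have h0 : Tendsto (fun n : ℕ => ‖q‖ ^ (n + 1)) atTop (𝓝 0) :=
        (tendsto_pow_atTop_nhds_zero_of_lt_one (norm_nonneg q) hq).comp
          (tendsto_add_atTop_nat 1)
      simpa using h0.div_const (1 - ‖q‖)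
    have hlt := ht.eventually_lt_const (by norm_num : (0 : ℝ) < 1 / 2)
    filter_upwards [hlt] with n hn
    have h1 : ‖a (n + 1)‖ = ‖a n‖ * (‖q‖ ^ (n + 1) / ‖1 + q ^ (n + 1)‖) := by
      rw [hrec n, norm_mul]
      congr 1
      rw [norm_div, norm_neg, norm_pow]
    rw [h1]
    have h2 : (0 : ℝ) < 1 - ‖q‖ := by linarith
    have h3 : ‖q‖ ^ (n + 1) / ‖1 + q ^ (n + 1)‖ ≤ ‖q‖ ^ (n + 1) / (1 - ‖q‖) :=
      div_le_div_of_nonneg_left (by positivity) h2 (norm_one_add_ge hq n)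
    have h4 : ‖q‖ ^ (n + 1) / ‖1 + q ^ (n + 1)‖ ≤ 1 / 2 := le_trans h3 hn.le
    calc ‖a n‖ * (‖q‖ ^ (n + 1) / ‖1 + q ^ (n + 1)‖) ≤ ‖a n‖ * (1 / 2) :=
          mul_le_mul_of_nonneg_left h4 (norm_nonneg _)
    _ = 1 / 2 * ‖a n‖ := by ring
  exact summable_of_ratio_norm_eventually_le (by norm_num) hev

/-- Summability of the right-hand series. -/
lemma summableB (hq : ‖q‖ < 1) :
    Summable (fun n : ℕ => q ^ (n * (3 * n + 1) / 2) * (1 - q ^ (2 * n + 1))) := by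
  apply Summable.of_norm_bounded (g := fun n : ℕ => 2 * ‖q‖ ^ n)
    ((summable_geometric_of_lt_one (norm_nonneg q) hq).mul_left 2)
  intro n
  rw [norm_mul, norm_pow]
  have h1 : ‖q‖ ^ (n * (3 * n + 1) / 2) ≤ ‖q‖ ^ n := by
    apply pow_le_pow_of_le_one (norm_nonneg q) hq.le
    have : n * 2 ≤ n * (3 * n + 1) := by
      cases n with
      | zero => simp
      | succ m => exact Nat.mul_le_mul_left _ (by omega)
    calc n = n * 2 / 2 := by omega
    _ ≤ n * (3 * n + 1) / 2 := Nat.div_le_div_right this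
  have h2 : ‖1 - q ^ (2 * n + 1)‖ ≤ 2 := by
    calc ‖1 - q ^ (2 * n + 1)‖ ≤ ‖(1 : ℂ)‖ + ‖q ^ (2 * n + 1)‖ := norm_sub_le _ _
    _ ≤ 2 := by
        rw [norm_one, norm_pow]
        have := pow_le_one₀ (norm_nonneg q) hq.le (n := 2 * n + 1)
        linarith
  calc ‖q‖ ^ (n * (3 * n + 1) / 2) * ‖1 - q ^ (2 * n + 1)‖
      ≤ ‖q‖ ^ n * 2 := by
        apply mul_le_mul h1 h2 (norm_nonneg _) (by positivity)
  _ = 2 * ‖q‖ ^ n := by ring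

/-- The remainder tends to zero. -/
lemma g_tendsto (hq : ‖q‖ < 1) :
    Tendsto (fun N : ℕ => (-1 : ℂ) ^ N * q ^ ((N + 1) * (N + 2) / 2)
      * (∑ k ∈ range (N + 1), (-1) ^ k * q ^ ((N + 1) * k) * P q k) / P q N)
      atTop (𝓝 0) := by
  have h2 : (0 : ℝ) < 1 - ‖q‖ := by linarith
  set C : ℝ := 2 / (1 - ‖q‖) with hC
  have hC0 : 0 ≤ C := by positivity
  set h : ℕ → ℝ := fun N => ((N : ℝ) + 1) * C ^ N * ‖q‖ ^ ((N + 1) * (N + 2) / 2) with hh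
  have hdef : ∀ N : ℕ, h N = ((N : ℝ) + 1) * C ^ N * ‖q‖ ^ ((N + 1) * (N + 2) / 2) :=
    fun N => rfl
  have hpos : ∀ N, 0 ≤ h N := by
    intro N
    apply mul_nonneg (mul_nonneg (by positivity) (by positivity)) (by positivity)
  have hbound : ∀ N : ℕ, ‖(-1 : ℂ) ^ N * q ^ ((N + 1) * (N + 2) / 2)
      * (∑ k ∈ range (N + 1), (-1) ^ k * q ^ ((N + 1) * k) * P q k) / P q N‖ ≤ h N := by
    intro N
    rw [norm_div, norm_mul, norm_mul, norm_pow, norm_pow, norm_neg, norm_one, one_pow,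
      one_mul]
    have hS : ‖∑ k ∈ range (N + 1), (-1 : ℂ) ^ k * q ^ ((N + 1) * k) * P q k‖
        ≤ ((N : ℝ) + 1) * 2 ^ N := by
      calc ‖∑ k ∈ range (N + 1), (-1 : ℂ) ^ k * q ^ ((N + 1) * k) * P q k‖
          ≤ ∑ k ∈ range (N + 1), ‖(-1 : ℂ) ^ k * q ^ ((N + 1) * k) * P q k‖ :=
            norm_sum_le _ _
      _ ≤ ∑ k ∈ range (N + 1), (2 : ℝ) ^ N := by
          apply Finset.sum_le_sum
          intro k hk
          rw [norm_mul, norm_mul, norm_pow, norm_pow, norm_neg, norm_one, one_pow, one_mul]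
          have hk' : k ≤ N := by
            have := Finset.mem_range.mp hk; omega
          calc ‖q‖ ^ ((N + 1) * k) * ‖P q k‖ ≤ 1 * (2 : ℝ) ^ k := by
                apply mul_le_mul (pow_le_one₀ (norm_nonneg q) hq.le) (P_norm_le hq k)
                  (norm_nonneg _) zero_le_one
          _ ≤ (2 : ℝ) ^ N := by
                rw [one_mul]
                exact pow_le_pow_right₀ (by norm_num) hk'
      _ = ((N : ℝ) + 1) * 2 ^ N := by
          rw [Finset.sum_const, card_range]; push_cast; ring
    have hP : (1 - ‖q‖) ^ N ≤ ‖P q N‖ := P_norm_ge hq N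
    have hPN0 : (0 : ℝ) < (1 - ‖q‖) ^ N := by positivity
    calc ‖q‖ ^ ((N + 1) * (N + 2) / 2)
          * ‖∑ k ∈ range (N + 1), (-1 : ℂ) ^ k * q ^ ((N + 1) * k) * P q k‖ / ‖P q N‖
        ≤ ‖q‖ ^ ((N + 1) * (N + 2) / 2) * (((N : ℝ) + 1) * 2 ^ N) / (1 - ‖q‖) ^ N := by
          apply div_le_div₀ (by positivity)
            (mul_le_mul_of_nonneg_left hS (by positivity)) hPN0 hP
    _ = h N := by
        rw [hdef, hC, div_pow]
        field_simp
  have hts : Tendsto h atTop (𝓝 0) := by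
    apply (summable_of_ratio_norm_eventually_le (r := 1 / 2)
      (by norm_num)  ?_).tendsto_atTop_zero
    have ht : Tendsto (fun N : ℕ => C * ‖q‖ ^ (N + 2)) atTop (𝓝 0) := by
      have h0 : Tendsto (fun n : ℕ => ‖q‖ ^ (n + 2)) atTop (𝓝 0) :=
        (tendsto_pow_atTop_nhds_zero_of_lt_one (norm_nonneg q) hq).comp
          (tendsto_add_atTop_nat 2)
      simpa using h0.const_mul C
    have hlt := ht.eventually_lt_const (by norm_num : (0 : ℝ) < 1 / 6)
    filter_upwards [hlt] with N hN
    rw [Real.norm_of_nonneg (hpos _), Real.norm_of_nonneg (hpos _)]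
    have e : ‖q‖ ^ ((N + 1 + 1) * (N + 1 + 2) / 2)
        = ‖q‖ ^ ((N + 1) * (N + 2) / 2) * ‖q‖ ^ (N + 2) := by
      have h4 : (N + 1 + 1) * (N + 1 + 2) = (N + 1) * (N + 2) + 2 * (N + 2) := by ring
      rw [h4, Nat.add_mul_div_left _ _ (by norm_num : 0 < 2), pow_add]
    have hstep : h (N + 1)
        = ((N : ℝ) + 2) * (C * ‖q‖ ^ (N + 2)) * (C ^ N * ‖q‖ ^ ((N + 1) * (N + 2) / 2)) := by
      rw [hdef, e]
      push_cast
      ring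
    rw [hstep]
    have hx : (0 : ℝ) ≤ C ^ N * ‖q‖ ^ ((N + 1) * (N + 2) / 2) := by positivity
    have hcq : 0 ≤ C * ‖q‖ ^ (N + 2) := by positivity
    calc ((N : ℝ) + 2) * (C * ‖q‖ ^ (N + 2)) * (C ^ N * ‖q‖ ^ ((N + 1) * (N + 2) / 2))
        ≤ ((N : ℝ) + 2) * (1 / 6) * (C ^ N * ‖q‖ ^ ((N + 1) * (N + 2) / 2)) := by
          apply mul_le_mul_of_nonneg_right
            (mul_le_mul_of_nonneg_left hN.le (by positivity)) hx
    _ ≤ 1 / 2 * h N := by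
        rw [hdef]
        nlinarith [hx, mul_nonneg hx (by positivity : (0:ℝ) ≤ (N : ℝ))]
  apply tendsto_zero_iff_norm_tendsto_zero.mpr
  exact squeeze_zero (fun n => norm_nonneg _) hbound hts

end Entry942

/-- Entry 9.4.2 of Andrews–Berndt. -/
theorem entry_942 (q : ℂ) (hq0 : 0 < ‖q‖) (hq1 : ‖q‖ < 1) :
    ∑' n : ℕ, (-1) ^ n * q ^ (n * (n + 1) / 2) / qPoch (-q) q n
    = ∑' n : ℕ, q ^ (n * (3 * n + 1) / 2) * (1 - q ^ (2 * n + 1)) := by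
  open Entry942 Filter Topology in
  have hq : ‖q‖ < 1 := hq1
  simp only [Entry942.P_eq]
  set a : ℕ → ℂ := fun n => (-1) ^ n * q ^ (n * (n + 1) / 2) / Entry942.P q n with ha
  set b : ℕ → ℂ := fun n => q ^ (n * (3 * n + 1) / 2) * (1 - q ^ (2 * n + 1)) with hb
  have hA : Summable a := Entry942.summableA hq
  have hB : Summable b := Entry942.summableB hq
  have h1 : Tendsto (fun N : ℕ => ∑ n ∈ Finset.range (N + 1), a n
      - ∑ n ∈ Finset.range (N + 1), b n) atTop (𝓝 ((∑' n, a n) - ∑' n, b n)) := by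
    have := (hA.hasSum.tendsto_sum_nat.sub hB.hasSum.tendsto_sum_nat).comp
      (tendsto_add_atTop_nat 1)
    exact this
  have h2 : ∀ N : ℕ, ∑ n ∈ Finset.range (N + 1), a n - ∑ n ∈ Finset.range (N + 1), b n
      = (-1 : ℂ) ^ N * q ^ ((N + 1) * (N + 2) / 2)
        * (∑ k ∈ Finset.range (N + 1), (-1) ^ k * q ^ ((N + 1) * k) * Entry942.P q k)
        / Entry942.P q N := by
    intro N
    rw [eq_div_iff (Entry942.P_ne hq N)]
    exact Entry942.key hq N
  have h3 := Entry942.g_tendsto hq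
  have h4 : Tendsto (fun N : ℕ => (-1 : ℂ) ^ N * q ^ ((N + 1) * (N + 2) / 2)
      * (∑ k ∈ Finset.range (N + 1), (-1) ^ k * q ^ ((N + 1) * k) * Entry942.P q k)
      / Entry942.P q N) atTop (𝓝 ((∑' n, a n) - ∑' n, b n)) := h1.congr h2
  have h5 : (∑' n, a n) - ∑' n, b n = 0 := tendsto_nhds_unique h4 h3
  exact sub_eq_zero.mp h5
end

section
/- Let q be a complex number with 0 < |q| < 1. Then ∑_{n=0}^∞ (q;q²)_n q^n = ∑_{n=0}^∞ (−1)^n q^{3n²+2n} (1 + q^{2n+1}). -/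
open Finset

lemma qPoch_succ_first (a Q : ℂ) (n : ℕ) :
    qPoch a Q (n + 1) = (1 - a) * qPoch (a * Q) Q n := by
  unfold qPoch
  rw [Finset.prod_range_succ']
  simp only [pow_zero, mul_one]
  rw [mul_comm]
  congr 1
  apply Finset.prod_congr rfl
  intro j _
  ring

lemma qPoch_succ_last (a Q : ℂ) (n : ℕ) :
    qPoch a Q (n + 1) = qPoch a Q n * (1 - a * Q ^ n) := by
  unfold qPoch
  rw [Finset.prod_range_succ]

/-- Uniform bound on the finite q-Pochhammer symbols. -/
lemma qPoch_abs_le (q a : ℂ) (hq1 : ‖q‖ < 1)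
    (ha : ‖a‖ ≤ ‖q‖) (n : ℕ) :
    ‖qPoch a (q ^ 2) n‖ ≤ Real.exp ((1 - ‖q‖)⁻¹) := by
  set K := ‖q‖ with hK
  have hK0 : 0 ≤ K := norm_nonneg q
  unfold qPoch
  rw [norm_prod]
  calc ∏ j ∈ Finset.range n, ‖1 - a * (q ^ 2) ^ j‖
      ≤ ∏ j ∈ Finset.range n, Real.exp (K ^ j) := by
        apply Finset.prod_le_prod
        · intro j _; exact norm_nonneg _
        · intro j _
          have h1 : ‖1 - a * (q ^ 2) ^ j‖ ≤ 1 + K ^ (2 * j + 1) := by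
            have h0 : ‖1 - a * (q ^ 2) ^ j‖
                ≤ 1 + ‖a‖ * K ^ (2 * j) := by
              have h := norm_sub_le (1 : ℂ) (a * (q ^ 2) ^ j)
              simpa [norm_mul, norm_pow, ← pow_mul, hK] using h
            have h0' : ‖a‖ * K ^ (2 * j) ≤ K * K ^ (2 * j) :=
              mul_le_mul_of_nonneg_right ha (pow_nonneg hK0 (2 * j))
            have h0'' : K * K ^ (2 * j) = K ^ (2 * j + 1) := by ring
            linarith
          have h2 : K ^ (2 * j + 1) ≤ K ^ j :=
            pow_le_pow_of_le_one hK0 hq1.le (by omega)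
          have h3 := Real.add_one_le_exp (K ^ j)
          linarith
    _ = Real.exp (∑ j ∈ Finset.range n, K ^ j) := by
        rw [Real.exp_sum]
    _ ≤ Real.exp ((1 - K)⁻¹) := by
        apply Real.exp_le_exp.mpr
        have hsum : ∑ j ∈ Finset.range n, K ^ j ≤ ∑' j : ℕ, K ^ j := by
          apply Summable.sum_le_tsum
          · intro i _; exact pow_nonneg hK0 i
          · exact summable_geometric_of_lt_one hK0 hq1
        rwa [tsum_geometric_of_lt_one hK0 hq1] at hsum

/-- Summability of the partial-theta type series. -/
lemma qPoch_summable (q a t : ℂ) (hq1 : ‖q‖ < 1)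
    (ha : ‖a‖ ≤ ‖q‖) (ht : ‖t‖ ≤ ‖q‖) :
    Summable (fun n : ℕ => qPoch a (q ^ 2) n * t ^ n) := by
  set K := ‖q‖ with hK
  have hK0 : 0 ≤ K := norm_nonneg q
  apply Summable.of_norm_bounded (g := fun n : ℕ => Real.exp ((1 - K)⁻¹) * K ^ n)
  · exact (summable_geometric_of_lt_one hK0 hq1).mul_left _
  · intro n
    rw [norm_mul, norm_pow]
    have h1 : ‖qPoch a (q ^ 2) n‖ ≤ Real.exp ((1 - K)⁻¹) := qPoch_abs_le q a hq1 ha n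
    have h2 : ‖t‖ ^ n ≤ K ^ n := pow_le_pow_left₀ (norm_nonneg t) ht n
    exact mul_le_mul h1 h2 (pow_nonneg (norm_nonneg t) n) (Real.exp_pos _).le

/-- The key functional equation (one step of Rogers–Fine iteration). -/
lemma rec_step (q t : ℂ) (hq1 : ‖q‖ < 1) (ht : ‖t‖ ≤ ‖q‖) :
    ∑' n : ℕ, qPoch t (q ^ 2) n * t ^ n
      = (1 + t) - q ^ 2 * t ^ 3 * ∑' n : ℕ, qPoch (t * q ^ 2) (q ^ 2) n * (t * q ^ 2) ^ n := by
  have hK0 : 0 ≤ ‖q‖ := norm_nonneg q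
  have hq1' : ‖q‖ ≤ 1 := hq1.le
  have habs_tq2 : ‖t * q ^ 2‖ ≤ ‖q‖ := by
    rw [norm_mul, norm_pow]
    calc ‖t‖ * ‖q‖ ^ 2
        ≤ ‖q‖ * (‖q‖ ^ 2) := by
          apply mul_le_mul_of_nonneg_right ht (pow_nonneg hK0 2)
      _ ≤ ‖q‖ * 1 := by
          apply mul_le_mul_of_nonneg_left _ hK0
          calc ‖q‖ ^ 2 ≤ 1 ^ 2 := pow_le_pow_left₀ hK0 hq1' 2
            _ = 1 := one_pow 2
      _ = ‖q‖ := mul_one _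
  have hA : Summable (fun n : ℕ => qPoch t (q ^ 2) n * t ^ n) :=
    qPoch_summable q t t hq1 ht ht
  have hD : Summable (fun n : ℕ => qPoch (t * q ^ 2) (q ^ 2) n * t ^ n) :=
    qPoch_summable q (t * q ^ 2) t hq1 habs_tq2 ht
  have hA' : Summable (fun n : ℕ => qPoch (t * q ^ 2) (q ^ 2) n * (t * q ^ 2) ^ n) :=
    qPoch_summable q (t * q ^ 2) (t * q ^ 2) hq1 habs_tq2 habs_tq2
  set A := ∑' n : ℕ, qPoch t (q ^ 2) n * t ^ n with hAdef
  set D := ∑' n : ℕ, qPoch (t * q ^ 2) (q ^ 2) n * t ^ n with hDdef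
  set A' := ∑' n : ℕ, qPoch (t * q ^ 2) (q ^ 2) n * (t * q ^ 2) ^ n with hA'def
  -- First relation : A = 1 + (t - t^2) * D
  have h1 : A = 1 + (t - t ^ 2) * D := by
    rw [hAdef, Summable.tsum_eq_zero_add hA]
    have e0 : qPoch t (q ^ 2) 0 * t ^ 0 = 1 := by simp [qPoch]
    rw [e0]
    congr 1
    have eterm : ∀ n : ℕ, qPoch t (q ^ 2) (n + 1) * t ^ (n + 1)
        = (t - t ^ 2) * (qPoch (t * q ^ 2) (q ^ 2) n * t ^ n) := by
      intro n
      rw [qPoch_succ_first]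
      ring
    rw [tsum_congr eterm, tsum_mul_left]
  -- Second relation : A = (1 - t^2) * D + q^2 * t^2 * A'
  have h2 : A = (1 - t ^ 2) * D + q ^ 2 * t ^ 2 * A' := by
    have hsub : Summable (fun n : ℕ =>
        qPoch t (q ^ 2) n * t ^ n - qPoch (t * q ^ 2) (q ^ 2) n * t ^ n) := hA.sub hD
    have hAD : A - D = ∑' n : ℕ,
        (qPoch t (q ^ 2) n * t ^ n - qPoch (t * q ^ 2) (q ^ 2) n * t ^ n) :=
      (Summable.tsum_sub hA hD).symm
    have hshift : (∑' n : ℕ,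
        (qPoch t (q ^ 2) n * t ^ n - qPoch (t * q ^ 2) (q ^ 2) n * t ^ n))
        = q ^ 2 * t ^ 2 * A' - t ^ 2 * D := by
      rw [Summable.tsum_eq_zero_add hsub]
      have e0 : qPoch t (q ^ 2) 0 * t ^ 0 - qPoch (t * q ^ 2) (q ^ 2) 0 * t ^ 0 = 0 := by
        simp [qPoch]
      rw [e0, zero_add]
      have eterm : ∀ n : ℕ,
          qPoch t (q ^ 2) (n + 1) * t ^ (n + 1) - qPoch (t * q ^ 2) (q ^ 2) (n + 1) * t ^ (n + 1)
          = q ^ 2 * t ^ 2 * (qPoch (t * q ^ 2) (q ^ 2) n * (t * q ^ 2) ^ n)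
            - t ^ 2 * (qPoch (t * q ^ 2) (q ^ 2) n * t ^ n) := by
        intro n
        rw [qPoch_succ_first, qPoch_succ_last]
        ring
      rw [tsum_congr eterm,
        Summable.tsum_sub (hA'.mul_left (q ^ 2 * t ^ 2)) (hD.mul_left (t ^ 2)),
        tsum_mul_left, tsum_mul_left]
    have : A - D = q ^ 2 * t ^ 2 * A' - t ^ 2 * D := by rw [hAD, hshift]
    linear_combination this
  linear_combination (1 + t) * h1 - t * h2

/-- Entry 9.5.2 of Andrews–Berndt. -/
theorem entry_952 (q : ℂ) (hq0 : 0 < ‖q‖) (hq1 : ‖q‖ < 1) :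
    ∑' n : ℕ, qPoch q (q ^ 2) n * q ^ n
    = ∑' n : ℕ, (-1) ^ n * q ^ (3 * n ^ 2 + 2 * n) * (1 + q ^ (2 * n + 1)) := by
  set K := ‖q‖ with hK
  have hK0 : 0 ≤ K := norm_nonneg q
  have hq1' : K ≤ 1 := hq1.le
  set C : ℝ := Real.exp ((1 - K)⁻¹) with hC
  -- the tails of the iteration
  set A : ℕ → ℂ := fun k => ∑' n : ℕ, qPoch (q ^ (2 * k + 1)) (q ^ 2) n * (q ^ (2 * k + 1)) ^ n
    with hAdef
  have habs : ∀ k : ℕ, ‖q ^ (2 * k + 1)‖ ≤ K := by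
    intro k
    rw [norm_pow]
    exact pow_le_of_le_one hK0 hq1' (by omega)
  -- recurrence
  have hrec : ∀ k : ℕ, A k = (1 + q ^ (2 * k + 1)) - q ^ (6 * k + 5) * A (k + 1) := by
    intro k
    have h := rec_step q (q ^ (2 * k + 1)) hq1 (habs k)
    have e1 : q ^ (2 * k + 1) * q ^ 2 = q ^ (2 * (k + 1) + 1) := by
      ring
    have e2 : q ^ 2 * (q ^ (2 * k + 1)) ^ 3 = q ^ (6 * k + 5) := by
      ring
    rw [e1, e2] at h
    exact h
  -- the finite iterated identity
  have hiter : ∀ N : ℕ, A 0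
      = (∑ k ∈ Finset.range N, (-1) ^ k * q ^ (3 * k ^ 2 + 2 * k) * (1 + q ^ (2 * k + 1)))
        + (-1) ^ N * q ^ (3 * N ^ 2 + 2 * N) * A N := by
    intro N
    induction N with
    | zero => simp
    | succ N ih =>
      rw [ih, hrec N, Finset.sum_range_succ]
      have e : q ^ (3 * N ^ 2 + 2 * N) * q ^ (6 * N + 5)
          = q ^ (3 * (N + 1) ^ 2 + 2 * (N + 1)) := by
        rw [← pow_add]; congr 1; ring
      rw [← e]
      ring
  -- uniform bound on the tails
  have hAsummable : ∀ k : ℕ,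
      Summable (fun n : ℕ => qPoch (q ^ (2 * k + 1)) (q ^ 2) n * (q ^ (2 * k + 1)) ^ n) :=
    fun k => qPoch_summable q _ _ hq1 (habs k) (habs k)
  have hAbound : ∀ k : ℕ, ‖A k‖ ≤ C * (1 - K)⁻¹ := by
    intro k
    have hnorm : Summable (fun n : ℕ =>
        ‖qPoch (q ^ (2 * k + 1)) (q ^ 2) n * (q ^ (2 * k + 1)) ^ n‖) :=
      (hAsummable k).norm
    calc ‖A k‖
        ≤ ∑' n : ℕ, ‖qPoch (q ^ (2 * k + 1)) (q ^ 2) n * (q ^ (2 * k + 1)) ^ n‖ :=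
          norm_tsum_le_tsum_norm hnorm
      _ ≤ ∑' n : ℕ, C * K ^ n := by
          apply Summable.tsum_le_tsum _ hnorm ((summable_geometric_of_lt_one hK0 hq1).mul_left C)
          intro n
          rw [norm_mul, norm_pow]
          have h1 : ‖qPoch (q ^ (2 * k + 1)) (q ^ 2) n‖ ≤ C :=
            qPoch_abs_le q _ hq1 (habs k) n
          have h2 : ‖q ^ (2 * k + 1)‖ ^ n ≤ K ^ n :=
            pow_le_pow_left₀ (norm_nonneg _) (habs k) n
          exact mul_le_mul h1 h2 (pow_nonneg (norm_nonneg _) n) (Real.exp_pos _).le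
      _ = C * (1 - K)⁻¹ := by
          rw [tsum_mul_left, tsum_geometric_of_lt_one hK0 hq1]
  -- the RHS series is summable
  have hS : Summable (fun n : ℕ => (-1 : ℂ) ^ n * q ^ (3 * n ^ 2 + 2 * n) * (1 + q ^ (2 * n + 1))) := by
    apply Summable.of_norm_bounded (g := fun n : ℕ => 2 * K ^ n)
    · exact (summable_geometric_of_lt_one hK0 hq1).mul_left 2
    · intro n
      rw [norm_mul, norm_mul, norm_pow, norm_pow, norm_neg, norm_one, one_pow, one_mul]
      have h1 : ‖q‖ ^ (3 * n ^ 2 + 2 * n) ≤ K ^ n :=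
        pow_le_pow_of_le_one hK0 hq1' (by nlinarith)
      have h2 : ‖1 + q ^ (2 * n + 1)‖ ≤ 2 := by
        calc ‖1 + q ^ (2 * n + 1)‖ ≤ ‖(1 : ℂ)‖ + ‖q ^ (2 * n + 1)‖ := norm_add_le _ _
          _ ≤ 1 + 1 := by
              rw [norm_one, norm_pow]
              have : ‖q‖ ^ (2 * n + 1) ≤ 1 := pow_le_one₀ hK0 hq1'
              linarith
          _ = 2 := by norm_num
      calc ‖q‖ ^ (3 * n ^ 2 + 2 * n) * ‖1 + q ^ (2 * n + 1)‖
          ≤ K ^ n * 2 := by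
            apply mul_le_mul h1 h2 (norm_nonneg _) (pow_nonneg hK0 n)
        _ = 2 * K ^ n := by ring
  -- partial sums of RHS tend to its sum
  have hT1 : Filter.Tendsto
      (fun N => ∑ k ∈ Finset.range N, (-1 : ℂ) ^ k * q ^ (3 * k ^ 2 + 2 * k) * (1 + q ^ (2 * k + 1)))
      Filter.atTop
      (nhds (∑' n : ℕ, (-1 : ℂ) ^ n * q ^ (3 * n ^ 2 + 2 * n) * (1 + q ^ (2 * n + 1)))) :=
    hS.hasSum.tendsto_sum_nat
  -- the error terms tend to zero
  have herr : Filter.Tendsto (fun N : ℕ => (-1 : ℂ) ^ N * q ^ (3 * N ^ 2 + 2 * N) * A N)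
      Filter.atTop (nhds 0) := by
    apply squeeze_zero_norm (a := fun N : ℕ => (C * (1 - K)⁻¹) * K ^ N)
    · intro N
      rw [norm_mul, norm_mul, norm_pow, norm_pow, norm_neg, norm_one, one_pow, one_mul]
      have h1 : ‖q‖ ^ (3 * N ^ 2 + 2 * N) ≤ K ^ N :=
        pow_le_pow_of_le_one hK0 hq1' (by nlinarith)
      have h2 : ‖A N‖ ≤ C * (1 - K)⁻¹ := hAbound N
      calc ‖q‖ ^ (3 * N ^ 2 + 2 * N) * ‖A N‖
          ≤ K ^ N * (C * (1 - K)⁻¹) := by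
            apply mul_le_mul h1 h2 (norm_nonneg _) (pow_nonneg hK0 N)
        _ = (C * (1 - K)⁻¹) * K ^ N := by ring
    · have : Filter.Tendsto (fun N : ℕ => K ^ N) Filter.atTop (nhds 0) :=
        tendsto_pow_atTop_nhds_zero_of_lt_one hK0 hq1
      have := this.const_mul (C * (1 - K)⁻¹)
      simpa using this
  -- partial sums of RHS also tend to A 0
  have hT2 : Filter.Tendsto
      (fun N => ∑ k ∈ Finset.range N, (-1 : ℂ) ^ k * q ^ (3 * k ^ 2 + 2 * k) * (1 + q ^ (2 * k + 1)))
      Filter.atTop (nhds (A 0)) := by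
    have heq : (fun N => ∑ k ∈ Finset.range N,
        (-1 : ℂ) ^ k * q ^ (3 * k ^ 2 + 2 * k) * (1 + q ^ (2 * k + 1)))
        = fun N => A 0 - (-1) ^ N * q ^ (3 * N ^ 2 + 2 * N) * A N := by
      funext N
      have := hiter N
      linear_combination -this
    rw [heq]
    have := Filter.Tendsto.sub (tendsto_const_nhds (x := A 0)) herr
    simpa using this
  have hfinal : A 0 = ∑' n : ℕ, (-1 : ℂ) ^ n * q ^ (3 * n ^ 2 + 2 * n) * (1 + q ^ (2 * n + 1)) :=
    tendsto_nhds_unique hT2 hT1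
  have hA0 : A 0 = ∑' n : ℕ, qPoch q (q ^ 2) n * q ^ n := by
    rw [hAdef]
    norm_num
  rw [← hA0, hfinal]
end
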